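/- arXiv:1710.05511 — 5 statements merged into one kernel-verified Lean document; each statement's English description precedes it below -/
import Mathlib

section
/- Let Γ_1,…,Γ_n be Hermitian d×d complex matrices, γ_1,…,γ_n real numbers, and S the corresponding constraint set. Let ρ ∈ S and let ∇ be a Hermitian d×d complex matrix. Suppose there exist λ ∈ ℝⁿ and a positive semidefinite d×d matrix Z such that ∇ + Σ_{i=1}^n λ_i Γ_iᵀ − Z = 0 and Tr(Zᵀ ρ) = 0 (Karush–Kuhn–Tucker conditions). Then for every σ ∈ S one has Re Tr((σ − ρ)ᵀ ∇) = Re Tr(Zᵀ σ) ≥ 0. -/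
open scoped BigOperators ComplexOrder Matrix

open Matrix in
lemma trace_mul_psd_re_nonneg {d : ℕ} (A B : Matrix (Fin d) (Fin d) ℂ)
    (hA : A.PosSemidef) (hB : B.PosSemidef) : 0 ≤ ((A * B).trace).re := by
  obtain ⟨C, hC⟩ : ∃ C : Matrix (Fin d) (Fin d) ℂ, A = Cᴴ * C := by
    open scoped MatrixOrder in
    obtain ⟨C, hC⟩ := CStarAlgebra.nonneg_iff_eq_star_mul_self.mp hA.nonneg
    exact ⟨C, hC⟩
  have hM : (C * B * Cᴴ).PosSemidef := hB.mul_mul_conjTranspose_same C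
  have htr : (A * B).trace = (C * B * Cᴴ).trace := by
    rw [hC, Matrix.mul_assoc, Matrix.trace_mul_comm, Matrix.mul_assoc]
  rw [htr, Matrix.trace]
  simp only [Complex.re_sum]
  apply Finset.sum_nonneg
  intro i _
  have := hM.re_dotProduct_nonneg (Pi.single i 1)
  simpa [dotProduct, Matrix.mulVec, Pi.single_apply, Matrix.diag] using this

/-- KKT conditions imply nonnegativity of the linearized change.
If `ρ ∈ S` and there exist `λ ∈ ℝⁿ` and a positive semidefinite `Z` with
`∇ + Σ λ_i Γ_iᵀ − Z = 0` and `Tr(Zᵀ ρ) = 0`, then for every `σ ∈ S`,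
`Re Tr((σ − ρ)ᵀ ∇) = Re Tr(Zᵀ σ) ≥ 0`. -/
theorem kkt_linearized_nonneg
    {d n : ℕ}
    (Γ : Fin n → Matrix (Fin d) (Fin d) ℂ) (hΓ : ∀ i, (Γ i).IsHermitian)
    (γ : Fin n → ℝ)
    (ρ : Matrix (Fin d) (Fin d) ℂ) (hρ : ρ.PosSemidef)
    (hρc : ∀ i, (Γ i * ρ).trace = (γ i : ℂ))
    (grad : Matrix (Fin d) (Fin d) ℂ) (hgrad : grad.IsHermitian)
    (lam : Fin n → ℝ) (Z : Matrix (Fin d) (Fin d) ℂ) (hZ : Z.PosSemidef)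
    (hkkt1 : grad + ∑ i, lam i • (Γ i)ᵀ - Z = 0)
    (hkkt2 : (Zᵀ * ρ).trace = 0) :
    ∀ σ : Matrix (Fin d) (Fin d) ℂ, σ.PosSemidef → (∀ i, (Γ i * σ).trace = (γ i : ℂ)) →
      (((σ - ρ)ᵀ * grad).trace).re = ((Zᵀ * σ).trace).re ∧
        0 ≤ ((Zᵀ * σ).trace).re := by
  intro σ hσ hσc
  have hgradeq : grad = Z - ∑ i, lam i • (Γ i)ᵀ := by
    have := hkkt1
    linear_combination (norm := abel) hkkt1
  constructor
  · have h1 : ((σ - ρ)ᵀ * grad).trace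
        = ((σ - ρ)ᵀ * Z).trace - ∑ i, (lam i : ℂ) * ((σ - ρ)ᵀ * (Γ i)ᵀ).trace := by
      rw [hgradeq, Matrix.mul_sub, Matrix.trace_sub, Matrix.mul_sum, Matrix.trace_sum]
      congr 1
      refine Finset.sum_congr rfl fun i _ => ?_
      rw [Matrix.mul_smul, Matrix.trace_smul]
      simp
    have h2 : ∀ i, ((σ - ρ)ᵀ * (Γ i)ᵀ).trace = 0 := by
      intro i
      have : (σ - ρ)ᵀ * (Γ i)ᵀ = (Γ i * (σ - ρ))ᵀ := (Matrix.transpose_mul _ _).symm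
      rw [this, Matrix.trace_transpose, Matrix.mul_sub, Matrix.trace_sub, hσc i, hρc i,
        sub_self]
    have h3 : ((σ - ρ)ᵀ * Z).trace = (Zᵀ * σ).trace := by
      have : (σ - ρ)ᵀ * Z = (Zᵀ * (σ - ρ))ᵀ := by
        rw [Matrix.transpose_mul, Matrix.transpose_transpose]
      rw [this, Matrix.trace_transpose, Matrix.mul_sub, Matrix.trace_sub, hkkt2, sub_zero]
    rw [h1, h3]
    simp only [h2, mul_zero, Finset.sum_const_zero, sub_zero]
  · have := trace_mul_psd_re_nonneg Zᵀ σ hZ.transpose hσ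
    exact this
end

section
/- Let ρ and σ be positive semidefinite d×d complex matrices. Then ‖ρ − σ‖₁² ≤ (Tr ρ + Tr σ)² − 4 ‖√ρ · √σ‖₁², where √ρ and √σ denote the positive semidefinite square roots of ρ and σ. -/
open scoped BigOperators ComplexOrder Matrix

local notation "⟪" x ", " y "⟫" => @inner ℂ _ _ x y

/-- The positive semidefinite square root, as `Matrix.PosSemidef.sqrt` was defined in the older Mathlib. -/
noncomputable def Matrix.PosSemidef.sqrt {n : Type*} [Fintype n] [DecidableEq n] {𝕜 : Type*} [RCLike 𝕜]
    {A : Matrix n n 𝕜} (hA : A.PosSemidef) : Matrix n n 𝕜 :=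
  hA.1.eigenvectorUnitary.1 * Matrix.diagonal ((↑) ∘ (√·) ∘ hA.1.eigenvalues) *
    (star hA.1.eigenvectorUnitary : Matrix n n 𝕜)

namespace Matrix.PosSemidef

lemma posSemidef_sqrt {n : Type*} [Fintype n] [DecidableEq n] {𝕜 : Type*} [RCLike 𝕜]
    {A : Matrix n n 𝕜} (hA : A.PosSemidef) : hA.sqrt.PosSemidef := by
  unfold Matrix.PosSemidef.sqrt
  rw [Matrix.star_eq_conjTranspose]
  apply Matrix.PosSemidef.mul_mul_conjTranspose_same
  rw [Matrix.posSemidef_diagonal_iff]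
  intro i
  simp

lemma sqrt_mul_self {n : Type*} [Fintype n] [DecidableEq n] {𝕜 : Type*} [RCLike 𝕜]
    {A : Matrix n n 𝕜} (hA : A.PosSemidef) : hA.sqrt * hA.sqrt = A := by
  unfold Matrix.PosSemidef.sqrt
  conv_rhs => rw [hA.1.spectral_theorem, Unitary.conjStarAlgAut_apply]
  have hU : (star hA.1.eigenvectorUnitary : Matrix n n 𝕜) * hA.1.eigenvectorUnitary.1 = 1 :=
    Matrix.UnitaryGroup.star_mul_self _
  simp only [Matrix.mul_assoc]
  rw [← Matrix.mul_assoc (star _ : Matrix n n 𝕜), hU, Matrix.one_mul, ← Matrix.mul_assoc (Matrix.diagonal _),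
    Matrix.diagonal_mul_diagonal]
  congr 2
  congr 1
  funext i
  simp only [Function.comp_apply]
  rw [← RCLike.ofReal_mul, Real.mul_self_sqrt (hA.eigenvalues_nonneg i)]

end Matrix.PosSemidef

/-- The trace norm `‖A‖₁ = Tr √(AᴴA)` of a square complex matrix. -/
noncomputable def traceNorm {d : ℕ} (A : Matrix (Fin d) (Fin d) ℂ) : ℝ :=
  ((Matrix.posSemidef_conjTranspose_mul_self A).sqrt).trace.re

namespace TNaux

variable {d : ℕ}

/-- Matrix as a Euclidean vector of its entries. -/
noncomputable def mvec (X : Matrix (Fin d) (Fin d) ℂ) : EuclideanSpace ℂ (Fin d × Fin d) :=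
  (WithLp.equiv 2 _).symm (fun p => X p.1 p.2)

lemma inner_mvec (X Y : Matrix (Fin d) (Fin d) ℂ) :
    ⟪mvec X, mvec Y⟫ = (Xᴴ * Y).trace := by
  simp only [mvec, PiLp.inner_apply, RCLike.inner_apply,
    Matrix.trace, Matrix.diag, Matrix.mul_apply, Matrix.conjTranspose_apply,
    Fintype.sum_prod_type]
  rw [Finset.sum_comm]
  simp [RCLike.star_def]
  exact Finset.sum_congr rfl fun _ _ => Finset.sum_congr rfl fun _ _ => mul_comm _ _

lemma nonneg_self (X : Matrix (Fin d) (Fin d) ℂ) : 0 ≤ ((Xᴴ * X).trace).re := by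
  rw [← inner_mvec]
  exact inner_self_nonneg (𝕜 := ℂ)

lemma sqrt_self_eq_norm (X : Matrix (Fin d) (Fin d) ℂ) :
    Real.sqrt ((Xᴴ * X).trace.re) = ‖mvec X‖ := by
  rw [@norm_eq_sqrt_re_inner ℂ, ← inner_mvec]
  simp [RCLike.re_to_complex]

lemma cs_re (X Y : Matrix (Fin d) (Fin d) ℂ) :
    ((Xᴴ * Y).trace).re ≤
      Real.sqrt ((Xᴴ * X).trace.re) * Real.sqrt ((Yᴴ * Y).trace.re) := by
  rw [sqrt_self_eq_norm, sqrt_self_eq_norm, ← inner_mvec]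
  exact le_trans (Complex.re_le_norm _) (norm_inner_le_norm (𝕜 := ℂ) _ _)

variable {d : ℕ}

lemma toEL_mul (C D : Matrix (Fin d) (Fin d) ℂ) :
    Matrix.toEuclideanLin (C * D) =
      (Matrix.toEuclideanLin C).comp (Matrix.toEuclideanLin D) := by
  simp only [Matrix.toEuclideanLin_eq_toLin]
  exact Matrix.toLin_mul _ _ _ C D

lemma inner_toEL_self (C : Matrix (Fin d) (Fin d) ℂ) (x : EuclideanSpace ℂ (Fin d)) :
    ⟪Matrix.toEuclideanLin C x, Matrix.toEuclideanLin C x⟫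
      = ⟪x, Matrix.toEuclideanLin (Cᴴ * C) x⟫ := by
  rw [toEL_mul, LinearMap.comp_apply, Matrix.toEuclideanLin_conjTranspose_eq_adjoint,
    LinearMap.adjoint_inner_right]

/-- Polar decomposition of a square complex matrix. -/
theorem exists_unitary_polar (M : Matrix (Fin d) (Fin d) ℂ) :
    ∃ W : Matrix (Fin d) (Fin d) ℂ, Wᴴ * W = 1 ∧
      M = W * (Matrix.posSemidef_conjTranspose_mul_self M).sqrt := by
  set P := (Matrix.posSemidef_conjTranspose_mul_self M).sqrt with hPdef
  have hP : P.PosSemidef := (Matrix.posSemidef_conjTranspose_mul_self M).posSemidef_sqrt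
  have hPh : Pᴴ = P := hP.1
  have hPP : P * P = Mᴴ * M := (Matrix.posSemidef_conjTranspose_mul_self M).sqrt_mul_self
  set f := Matrix.toEuclideanLin M with hf
  set g := Matrix.toEuclideanLin P with hg
  have hnorm : ∀ x, ‖f x‖ = ‖g x‖ := by
    intro x
    rw [@norm_eq_sqrt_re_inner ℂ, @norm_eq_sqrt_re_inner ℂ]
    congr 2
    rw [hf, hg, inner_toEL_self, inner_toEL_self, hPh, hPP]
  have hker : LinearMap.ker g ≤ LinearMap.ker f := by
    intro x hx
    rw [LinearMap.mem_ker] at hx ⊢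
    rw [← norm_eq_zero, hnorm x, hx, norm_zero]
  -- the partial isometry on the range of g
  set L1 : LinearMap.range g →ₗ[ℂ] EuclideanSpace ℂ (Fin d) :=
    ((LinearMap.ker g).liftQ f hker).comp g.quotKerEquivRange.symm.toLinearMap with hL1def
  have hL1 : ∀ x, L1 ⟨g x, LinearMap.mem_range_self g x⟩ = f x := by
    intro x
    rw [hL1def, LinearMap.comp_apply, LinearEquiv.coe_toLinearMap,
      LinearMap.quotKerEquivRange_symm_apply_image]
    rfl
  have hL1norm : ∀ s : LinearMap.range g, ‖L1 s‖ = ‖s‖ := by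
    rintro ⟨-, x, rfl⟩
    rw [hL1 x]
    exact (hnorm x).trans rfl
  set L : LinearMap.range g →ₗᵢ[ℂ] EuclideanSpace ℂ (Fin d) := ⟨L1, hL1norm⟩ with hLdef
  set W' := L.extend with hW'def
  have hW' : ∀ x, W' (g x) = f x := by
    intro x
    have := L.extend_apply ⟨g x, LinearMap.mem_range_self g x⟩
    rw [hLdef] at this
    exact this.trans (hL1 x)
  set U := Matrix.toEuclideanLin.symm W'.toLinearMap with hUdef
  have hU : Matrix.toEuclideanLin U = W'.toLinearMap := Matrix.toEuclideanLin.apply_symm_apply _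
  refine ⟨U, ?_, ?_⟩
  · -- unitarity
    ext i j
    have hcol : ∀ (k : Fin d) (z : EuclideanSpace ℂ (Fin d)),
        W' z k = Matrix.toEuclideanLin U z k := by
      intro k z; rw [hU]; rfl
    have hcol2 : ∀ (a k : Fin d),
        Matrix.toEuclideanLin U (EuclideanSpace.single a (1:ℂ)) k = U k a := by
      intro a k
      rw [Matrix.toEuclideanLin_apply]
      simp [Matrix.mulVec_single]
    have hinner := W'.inner_map_map (EuclideanSpace.single i (1:ℂ))
      (EuclideanSpace.single j (1:ℂ))
    have hL : ⟪W' (EuclideanSpace.single i (1:ℂ)), W' (EuclideanSpace.single j (1:ℂ))⟫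
        = ∑ k, (starRingEnd ℂ) (U k i) * U k j := by
      rw [PiLp.inner_apply]
      refine Finset.sum_congr rfl fun k _ => ?_
      rw [RCLike.inner_apply, hcol, hcol, hcol2, hcol2]
      exact mul_comm _ _
    rw [hL] at hinner
    have hR : ⟪(EuclideanSpace.single i (1:ℂ)), (EuclideanSpace.single j (1:ℂ))⟫
        = if i = j then (1:ℂ) else 0 := by
      simp [EuclideanSpace.inner_single_left, EuclideanSpace.single_apply, eq_comm]
    rw [hR] at hinner
    simp only [Matrix.mul_apply, Matrix.conjTranspose_apply, Matrix.one_apply, RCLike.star_def]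
    rw [hinner]
  · -- M = U * P
    apply Matrix.toEuclideanLin.injective
    rw [toEL_mul, hU]
    exact LinearMap.ext fun x => (hW' x).symm

end TNaux

/-- For positive semidefinite matrices `ρ, σ`,
`‖ρ − σ‖₁² ≤ (Tr ρ + Tr σ)² − 4 ‖√ρ √σ‖₁²`. -/
theorem traceNorm_sub_sq_le
    {d : ℕ} {ρ σ : Matrix (Fin d) (Fin d) ℂ}
    (hρ : ρ.PosSemidef) (hσ : σ.PosSemidef) :
    traceNorm (ρ - σ) ^ 2 ≤
      (ρ.trace.re + σ.trace.re) ^ 2 - 4 * traceNorm (hρ.sqrt * hσ.sqrt) ^ 2 := by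
  set A := hρ.sqrt with hAdef
  set B := hσ.sqrt with hBdef
  have hAh : Aᴴ = A := hρ.posSemidef_sqrt.1
  have hBh : Bᴴ = B := hσ.posSemidef_sqrt.1
  have hAA : A * A = ρ := hρ.sqrt_mul_self
  have hBB : B * B = σ := hσ.sqrt_mul_self
  obtain ⟨W₁, hW₁, hM₁⟩ := TNaux.exists_unitary_polar (ρ - σ)
  obtain ⟨W₂, hW₂, hM₂⟩ := TNaux.exists_unitary_polar (A * B)
  have hW₁' : W₁ * W₁ᴴ = 1 := mul_eq_one_comm.mp hW₁
  have hW₂' : W₂ * W₂ᴴ = 1 := mul_eq_one_comm.mp hW₂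
  set Q := (Matrix.posSemidef_conjTranspose_mul_self (ρ - σ)).sqrt with hQdef
  set P := (Matrix.posSemidef_conjTranspose_mul_self (A * B)).sqrt with hPdef
  have hQps : Q.PosSemidef := (Matrix.posSemidef_conjTranspose_mul_self _).posSemidef_sqrt
  have hPps : P.PosSemidef := (Matrix.posSemidef_conjTranspose_mul_self _).posSemidef_sqrt
  have hPh : Pᴴ = P := hPps.1
  set X := A * W₂ with hXdef
  have hXh : Xᴴ = W₂ᴴ * A := by rw [hXdef, Matrix.conjTranspose_mul, hAh]
  have hXXh : X * Xᴴ = ρ := by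
    rw [hXdef, hXh, Matrix.mul_assoc, ← Matrix.mul_assoc W₂, hW₂', Matrix.one_mul, hAA]
  have hBBh : B * Bᴴ = σ := by rw [hBh, hBB]
  -- trace identities
  have trXX : (Xᴴ * X).trace = ρ.trace := by
    rw [Matrix.trace_mul_comm, hXXh]
  have trBB : (Bᴴ * B).trace = σ.trace := by rw [hBh, hBB]
  have hBA : B * A = P * W₂ᴴ := by
    have h1 : (A * B)ᴴ = B * A := by rw [Matrix.conjTranspose_mul, hAh, hBh]
    have h2 : (A * B)ᴴ = P * W₂ᴴ := by rw [hM₂, Matrix.conjTranspose_mul, hPh]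
    rw [← h1, h2]
  have hBX : Bᴴ * X = P := by
    rw [hBh, hXdef, ← Matrix.mul_assoc, hBA, Matrix.mul_assoc, hW₂, Matrix.mul_one]
  have hXB : Xᴴ * B = P := by
    have : (Bᴴ * X)ᴴ = Xᴴ * B := by rw [Matrix.conjTranspose_mul, Matrix.conjTranspose_conjTranspose]
    rw [← this, hBX, hPh]
  -- notation
  set t := Q.trace.re with htdef
  set F := P.trace.re with hFdef
  set a := (((X - B)ᴴ * (X - B)).trace).re with hadef
  set b := (((X + B)ᴴ * (X + B)).trace).re with hbdef
  have ha0 : 0 ≤ a := TNaux.nonneg_self _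
  have hb0 : 0 ≤ b := TNaux.nonneg_self _
  have ht0 : 0 ≤ t := by
    have h1 : Q = (hQps.sqrt)ᴴ * hQps.sqrt := by
      rw [hQps.posSemidef_sqrt.1, hQps.sqrt_mul_self]
    rw [htdef, h1]
    exact TNaux.nonneg_self _
  -- values of a and b
  have ha : a = ρ.trace.re + σ.trace.re - 2 * F := by
    have h1 : ((X - B)ᴴ * (X - B)).trace
        = (Xᴴ * X).trace - (Xᴴ * B).trace - (Bᴴ * X).trace + (Bᴴ * B).trace := by
      rw [Matrix.conjTranspose_sub, Matrix.sub_mul, Matrix.mul_sub, Matrix.mul_sub]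
      rw [Matrix.trace_sub, Matrix.trace_sub, Matrix.trace_sub]
      ring
    rw [hadef, h1, trXX, hXB, hBX, trBB]
    simp only [Complex.add_re, Complex.sub_re]
    rw [← hFdef]
    ring
  have hb : b = ρ.trace.re + σ.trace.re + 2 * F := by
    have h1 : ((X + B)ᴴ * (X + B)).trace
        = (Xᴴ * X).trace + (Xᴴ * B).trace + (Bᴴ * X).trace + (Bᴴ * B).trace := by
      rw [Matrix.conjTranspose_add, Matrix.add_mul, Matrix.mul_add, Matrix.mul_add]
      rw [Matrix.trace_add, Matrix.trace_add, Matrix.trace_add]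
      ring
    rw [hbdef, h1, trXX, hXB, hBX, trBB]
    simp only [Complex.add_re]
    rw [← hFdef]
    ring
  -- key trace identity for 2t
  have hQ1 : W₁ᴴ * (ρ - σ) = Q := by
    rw [hM₁, ← Matrix.mul_assoc, hW₁, Matrix.one_mul]
  have hsum : (X - B) * (X + B)ᴴ + (X + B) * (X - B)ᴴ = (ρ - σ) + (ρ - σ) := by
    rw [Matrix.conjTranspose_add, Matrix.conjTranspose_sub]
    rw [← hXXh, ← hBBh]
    noncomm_ring
  have key : ((W₁ * (X + B))ᴴ * (X - B)).trace + ((W₁ * (X - B))ᴴ * (X + B)).trace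
      = 2 * Q.trace := by
    rw [Matrix.conjTranspose_mul, Matrix.conjTranspose_mul]
    rw [Matrix.mul_assoc ((X + B)ᴴ), Matrix.trace_mul_comm ((X + B)ᴴ)]
    rw [Matrix.mul_assoc ((X - B)ᴴ), Matrix.trace_mul_comm ((X - B)ᴴ)]
    rw [Matrix.mul_assoc W₁ᴴ, Matrix.mul_assoc W₁ᴴ, ← Matrix.trace_add, ← Matrix.mul_add,
      hsum, Matrix.mul_add, Matrix.trace_add, hQ1]
    ring
  -- unitary invariance
  have huni : ∀ Z : Matrix (Fin d) (Fin d) ℂ, ((W₁ * Z)ᴴ * (W₁ * Z)).trace = (Zᴴ * Z).trace := by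
    intro Z
    rw [Matrix.conjTranspose_mul, Matrix.mul_assoc, ← Matrix.mul_assoc W₁ᴴ, hW₁, Matrix.one_mul]
  -- bound 2t
  have h2t : 2 * t ≤ 2 * (Real.sqrt a * Real.sqrt b) := by
    have b1 := TNaux.cs_re (W₁ * (X + B)) (X - B)
    have b2 := TNaux.cs_re (W₁ * (X - B)) (X + B)
    rw [huni] at b1 b2
    have hre : ((W₁ * (X + B))ᴴ * (X - B)).trace.re + ((W₁ * (X - B))ᴴ * (X + B)).trace.re
        = 2 * t := by
      rw [htdef, ← Complex.add_re, key]
      simp [Complex.mul_re]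
    rw [← hre]
    calc ((W₁ * (X + B))ᴴ * (X - B)).trace.re + ((W₁ * (X - B))ᴴ * (X + B)).trace.re
        ≤ Real.sqrt b * Real.sqrt a + Real.sqrt a * Real.sqrt b := add_le_add b1 b2
      _ = 2 * (Real.sqrt a * Real.sqrt b) := by ring
  have ht : t ≤ Real.sqrt a * Real.sqrt b := by linarith
  -- conclude
  have e1 : traceNorm (ρ - σ) = t := rfl
  have e2 : traceNorm (A * B) = F := rfl
  rw [e1, e2]
  have h1 : t ^ 2 ≤ (Real.sqrt a * Real.sqrt b) ^ 2 := by
    exact pow_le_pow_left₀ ht0 ht 2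
  have h2 : (Real.sqrt a * Real.sqrt b) ^ 2 = a * b := by
    rw [mul_pow, Real.sq_sqrt ha0, Real.sq_sqrt hb0]
  rw [h2, ha, hb] at h1
  have h3 : (ρ.trace.re + σ.trace.re - 2 * F) * (ρ.trace.re + σ.trace.re + 2 * F)
      = (ρ.trace.re + σ.trace.re) ^ 2 - 4 * F ^ 2 := by ring
  linarith
end

section
/- Let ρ be a d×d density matrix, let G be a CPTNI map from d×d to d'×d' complex matrices with d' ≥ 2, let Z be a pinching channel on d'×d' complex matrices, and let ε satisfy 0 < ε ≤ 1/(e·(d'−1)), where e is the base of the natural logarithm. Define f(ρ) = H(Z(G(ρ))) − H(G(ρ)), G_ε(ρ) = (1−ε)·G(ρ) + (ε/d')·I_{d'}, f_ε(ρ) = H(Z(G_ε(ρ))) − H(G_ε(ρ)), and ζ_ε = 2ε(d'−1)·log(d'/(ε(d'−1))). Then |f(ρ) − f_ε(ρ)| ≤ ζ_ε. -/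
open scoped BigOperators ComplexOrder Matrix

/-- The von Neumann entropy `H(σ) = −Σ λ_i log λ_i` of a Hermitian matrix
(`0` for non-Hermitian matrices; `log` is the natural logarithm, `0 log 0 = 0`). -/
noncomputable def vnEntropy {d : ℕ} (A : Matrix (Fin d) (Fin d) ℂ) : ℝ :=
  if hA : A.IsHermitian then -∑ i, hA.eigenvalues i * Real.log (hA.eigenvalues i) else 0

open Polynomial in
lemma charpoly_conj_aux {n : Type*} [Fintype n] [DecidableEq n]
    (U B V : Matrix n n ℂ) (hUV : U * V = 1) :
    (U * B * V).charpoly = B.charpoly := by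
  have hUV' : (C : ℂ →+* ℂ[X]).mapMatrix U * (C : ℂ →+* ℂ[X]).mapMatrix V = 1 := by
    rw [← map_mul, hUV, map_one]
  have hscal : ((Matrix.scalar n (X : ℂ[X]))) * ((C : ℂ →+* ℂ[X]).mapMatrix V)
      = ((C : ℂ →+* ℂ[X]).mapMatrix V) * (Matrix.scalar n (X : ℂ[X])) :=
    (Matrix.scalar_commute X (fun r => Commute.all X r) _).eq
  have key : Matrix.charmatrix (U * B * V)
      = (C : ℂ →+* ℂ[X]).mapMatrix U * Matrix.charmatrix B * (C : ℂ →+* ℂ[X]).mapMatrix V := by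
    unfold Matrix.charmatrix
    rw [Matrix.mul_sub, Matrix.sub_mul, map_mul, map_mul]
    congr 1
    rw [mul_assoc, hscal, ← mul_assoc, hUV', one_mul]
  have h1 : ((C : ℂ →+* ℂ[X]).mapMatrix U).det * ((C : ℂ →+* ℂ[X]).mapMatrix V).det = 1 := by
    rw [← Matrix.det_mul, hUV', Matrix.det_one]
  show (Matrix.charmatrix (U * B * V)).det = (Matrix.charmatrix B).det
  rw [key, Matrix.det_mul, Matrix.det_mul]
  linear_combination (Matrix.charmatrix B).det * h1

open Polynomial in
lemma charpoly_diag {n : Type*} [Fintype n] [DecidableEq n] (v : n → ℂ) :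
    (Matrix.diagonal v).charpoly = ∏ i, (X - C (v i)) := by
  have h : Matrix.charmatrix (Matrix.diagonal v) = Matrix.diagonal (fun i => X - C (v i)) := by
    ext i j
    by_cases h : i = j
    · subst h; simp [Matrix.charmatrix_apply_eq]
    · simp [Matrix.charmatrix_apply_ne _ _ _ h, Matrix.diagonal_apply_ne _ h]
  show (Matrix.charmatrix (Matrix.diagonal v)).det = _
  rw [h, Matrix.det_diagonal]

open Polynomial in
lemma charpoly_hermitian {n : Type*} [Fintype n] [DecidableEq n]
    {B : Matrix n n ℂ} (hB : B.IsHermitian) :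
    B.charpoly = ∏ i, (X - C ((hB.eigenvalues i : ℂ))) := by
  conv_lhs => rw [hB.spectral_theorem]
  rw [Unitary.conjStarAlgAut_apply]
  rw [charpoly_conj_aux _ _ _ (Matrix.mem_unitaryGroup_iff.mp (hB.eigenvectorUnitary).2),
    charpoly_diag]
  rfl

open Polynomial in
lemma sum_eig_eq_of_charpoly {n : Type*} [Fintype n] [DecidableEq n]
    {B : Matrix n n ℂ} (hB : B.IsHermitian) (w : n → ℝ)
    (h : B.charpoly = ∏ i, (X - C ((w i : ℂ)))) (φ : ℝ → ℝ) :
    ∑ i, φ (hB.eigenvalues i) = ∑ i, φ (w i) := by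
  have hroots : ∀ a : n → ℂ, (∏ i, (X - C (a i))).roots = Finset.univ.val.map a := by
    intro a
    have e1 : Multiset.map (fun i => X - C (a i)) Finset.univ.val
        = (Multiset.map a Finset.univ.val).map (fun r => X - C r) := by
      rw [Multiset.map_map]; rfl
    rw [Finset.prod_eq_multiset_prod, e1]
    exact roots_multiset_prod_X_sub_C _
  have h2 : Finset.univ.val.map (fun i => ((hB.eigenvalues i : ℂ)))
      = Finset.univ.val.map (fun i => ((w i : ℂ))) := by
    rw [← hroots, ← hroots, ← h, ← charpoly_hermitian hB]
  have h3 : Finset.univ.val.map hB.eigenvalues = Finset.univ.val.map w := by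
    apply Multiset.map_injective (f := (Complex.ofReal : ℝ → ℂ)) Complex.ofReal_injective
    rw [Multiset.map_map, Multiset.map_map]
    exact h2
  have e2 : ∀ v : n → ℝ, Multiset.map (fun i => φ (v i)) Finset.univ.val
      = (Multiset.map v Finset.univ.val).map φ := by
    intro v; rw [Multiset.map_map]; rfl
  rw [Finset.sum_eq_multiset_sum, Finset.sum_eq_multiset_sum, e2, e2, h3]

lemma trace_eq_sum_eig {n : Type*} [Fintype n] [DecidableEq n]
    {A : Matrix n n ℂ} (hA : A.IsHermitian) :
    A.trace = ((∑ i, hA.eigenvalues i : ℝ) : ℂ) := by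
  conv_lhs => rw [hA.spectral_theorem]
  rw [Unitary.conjStarAlgAut_apply]
  rw [Matrix.trace_mul_comm, ← mul_assoc, Unitary.coe_star_mul_self, one_mul,
    Matrix.trace_diagonal]
  push_cast
  rfl

open Polynomial in
lemma sum_phi_eig_affine {n : Type*} [Fintype n] [DecidableEq n]
    {A : Matrix n n ℂ} (hA : A.IsHermitian) (c b : ℝ)
    {B : Matrix n n ℂ} (hBdef : B = c • A + b • (1 : Matrix n n ℂ))
    (hB : B.IsHermitian) (φ : ℝ → ℝ) :
    ∑ i, φ (hB.eigenvalues i) = ∑ i, φ (c * hA.eigenvalues i + b) := by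
  apply sum_eig_eq_of_charpoly hB (fun i => c * hA.eigenvalues i + b)
  set U := (hA.eigenvectorUnitary : Matrix n n ℂ) with hUdef
  have hUV : U * star U = 1 := Matrix.mem_unitaryGroup_iff.mp (hA.eigenvectorUnitary).2
  have hdiag : Matrix.diagonal (fun i => (((c * hA.eigenvalues i + b : ℝ)) : ℂ))
      = c • Matrix.diagonal (RCLike.ofReal ∘ hA.eigenvalues) + b • (1 : Matrix n n ℂ) := by
    ext i j
    by_cases h : i = j
    · subst h
      simp only [Matrix.diagonal_apply_eq, Matrix.add_apply, Matrix.smul_apply,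
        Matrix.one_apply_eq, Function.comp_apply]
      push_cast
      simp [Complex.real_smul]
    · simp [Matrix.diagonal_apply_ne _ h, Matrix.one_apply_ne h]
  have hB2 : B = U * Matrix.diagonal (fun i => (((c * hA.eigenvalues i + b : ℝ)) : ℂ)) * star U := by
    rw [hdiag, Matrix.mul_add, Matrix.add_mul, Matrix.mul_smul, Matrix.mul_smul,
      Matrix.smul_mul, Matrix.smul_mul, mul_one, hUV, hBdef]
    congr 1
    exact congrArg _ hA.spectral_theorem
  rw [hB2, charpoly_conj_aux _ _ _ hUV, charpoly_diag]

lemma negMulLog_mono {s a : ℝ} (hs : 0 ≤ s) (hsa : s ≤ a) (ha : a ≤ (Real.exp 1)⁻¹) :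
    Real.negMulLog s ≤ Real.negMulLog a := by
  have ha1 : a ≤ 1 := ha.trans (by
    rw [← Real.exp_neg]
    exact (Real.exp_le_one_iff.mpr (by norm_num)))
  rcases eq_or_lt_of_le hs with h | hs0
  · rw [← h, Real.negMulLog_zero]
    exact Real.negMulLog_nonneg (hs.trans hsa) ha1
  · have ha0 : 0 < a := lt_of_lt_of_le hs0 hsa
    set c := s / a with hc
    have hc0 : 0 < c := div_pos hs0 ha0
    have hc1 : c ≤ 1 := (div_le_one ha0).mpr hsa
    have hsac : s = a * c := by rw [hc]; field_simp
    have hLa : 1 ≤ -Real.log a := by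
      have := Real.log_le_log (by positivity) ha
      rw [Real.log_inv, Real.log_exp] at this
      linarith
    have hLc : -Real.log c ≤ c⁻¹ - 1 := by
      have := Real.log_le_sub_one_of_pos (x := c⁻¹) (by positivity)
      rw [Real.log_inv] at this
      linarith
    rw [hsac, Real.negMulLog_mul]
    have e1 : a * Real.negMulLog c ≤ a * (1 - c) := by
      rw [Real.negMulLog]
      have : -c * Real.log c = c * (-Real.log c) := by ring
      rw [this]
      have h2 : c * (-Real.log c) ≤ c * (c⁻¹ - 1) := by
        exact mul_le_mul_of_nonneg_left hLc hc0.le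
      have h3 : c * (c⁻¹ - 1) = 1 - c := by field_simp
      nlinarith
    have e2 : a * (1 - c) ≤ (1 - c) * Real.negMulLog a := by
      rw [Real.negMulLog]
      nlinarith
    nlinarith [e1, e2]

lemma negMulLog_diff_le {u t : ℝ} (hu : 0 ≤ u) (ht : 0 ≤ t) (hut : u + t ≤ 1)
    (hte : t ≤ (Real.exp 1)⁻¹) :
    |Real.negMulLog (u + t) - Real.negMulLog u| ≤ Real.negMulLog t := by
  rcases eq_or_lt_of_le ht with h | ht0
  · simp [← h]
  have htnn : 0 ≤ Real.negMulLog t :=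
    Real.negMulLog_nonneg ht (by linarith)
  have htle : t ≤ Real.negMulLog t := by
    have hLt : 1 ≤ -Real.log t := by
      have := Real.log_le_log ht0 hte
      rw [Real.log_inv, Real.log_exp] at this
      linarith
    rw [Real.negMulLog]
    nlinarith
  rw [abs_le]
  constructor
  · -- nML u - nML (u+t) ≤ nML t, i.e. -(nML t) ≤ nML(u+t) - nML u
    rcases eq_or_lt_of_le hu with h | hu0
    · rw [← h, zero_add, Real.negMulLog_zero]
      linarith
    · have hlog : Real.log (u + t) - Real.log u ≤ t / u := by
        have h1 : Real.log ((u+t)/u) ≤ (u+t)/u - 1 := Real.log_le_sub_one_of_pos (by positivity)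
        rw [Real.log_div (by positivity) (by positivity)] at h1
        have : (u+t)/u - 1 = t/u := by field_simp; ring
        linarith [this ▸ h1]
      have hlogut : Real.log (u + t) ≤ 0 :=
        Real.log_nonpos (by positivity) hut
      have key : Real.negMulLog u - Real.negMulLog (u + t) ≤ t := by
        have expand : Real.negMulLog u - Real.negMulLog (u + t)
            = u * (Real.log (u+t) - Real.log u) + t * Real.log (u+t) := by
          simp [Real.negMulLog]; ring
        have b1 : u * (Real.log (u+t) - Real.log u) ≤ t := by
          calc u * (Real.log (u+t) - Real.log u) ≤ u * (t/u) :=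
                mul_le_mul_of_nonneg_left hlog hu0.le
            _ = t := by field_simp
        nlinarith [mul_nonpos_of_nonneg_of_nonpos ht hlogut]
      linarith
  · -- nML(u+t) - nML u ≤ nML t
    have h1 : u * Real.log u ≤ u * Real.log (u + t) := by
      rcases eq_or_lt_of_le hu with h | hu0
      · simp [← h]
      · exact mul_le_mul_of_nonneg_left (Real.log_le_log hu0 (by linarith)) hu0.le
    have h2 : t * Real.log t ≤ t * Real.log (u + t) :=
      mul_le_mul_of_nonneg_left (Real.log_le_log ht0 (by linarith)) ht0.le
    simp only [Real.negMulLog]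
    nlinarith

lemma sum_abs_dev {n : ℕ} (hn : 2 ≤ n) (x : Fin n → ℝ) (hx0 : ∀ i, 0 ≤ x i)
    (hT : ∑ i, x i ≤ 1) :
    ∑ i, |x i - 1/(n:ℝ)| ≤ 2*((n:ℝ)-1)/n := by
  have hn0 : (0:ℝ) < n := by positivity
  have habs : ∀ a b : ℝ, |a - b| = a + b - 2 * min a b := by
    intro a b
    rcases le_total a b with h | h
    · rw [abs_of_nonpos (by linarith), min_eq_left h]; ring
    · rw [abs_of_nonneg (by linarith), min_eq_right h]; ring
  have hsum : ∑ i, |x i - 1/(n:ℝ)|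
      = (∑ i, x i) + 1 - 2 * ∑ i, min (x i) (1/(n:ℝ)) := by
    rw [Finset.sum_congr rfl (fun i _ => habs (x i) (1/(n:ℝ)))]
    rw [Finset.sum_sub_distrib, Finset.sum_add_distrib, ← Finset.mul_sum]
    have : ∑ _i : Fin n, (1:ℝ)/n = 1 := by
      rw [Finset.sum_const, Finset.card_univ, Fintype.card_fin, nsmul_eq_mul]
      field_simp
    rw [this]
  rw [hsum]
  by_cases hex : ∃ j, 1/(n:ℝ) ≤ x j
  · obtain ⟨j, hj⟩ := hex
    have hM : 1/(n:ℝ) ≤ ∑ i, min (x i) (1/(n:ℝ)) := by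
      have := Finset.single_le_sum (f := fun i => min (x i) (1/(n:ℝ)))
        (fun i _ => le_min (hx0 i) (by positivity)) (Finset.mem_univ j)
      · calc (1:ℝ)/n = min (x j) (1/(n:ℝ)) := (min_eq_right hj).symm
          _ ≤ _ := this
    have : 2*((n:ℝ)-1)/n = 2 - 2/n := by field_simp
    rw [this]
    have : (2:ℝ)/n = 2 * (1/n) := by ring
    linarith
  · push_neg at hex
    have hM : ∑ i, min (x i) (1/(n:ℝ)) = ∑ i, x i :=
      Finset.sum_congr rfl (fun i _ => min_eq_left (hex i).le)
    rw [hM]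
    have h2n : 2/(n:ℝ) ≤ 1 := by
      rw [div_le_one hn0]
      exact_mod_cast hn
    have hTnn : 0 ≤ ∑ i, x i := Finset.sum_nonneg (fun i _ => hx0 i)
    have : 2*((n:ℝ)-1)/n = 2 - 2/n := by field_simp
    rw [this]
    linarith

lemma negMulLog_abs_diff {u v : ℝ} (hu : 0 ≤ u) (hv : 0 ≤ v) (hu1 : u ≤ 1) (hv1 : v ≤ 1)
    (h : |u - v| ≤ (Real.exp 1)⁻¹) :
    |Real.negMulLog u - Real.negMulLog v| ≤ Real.negMulLog |u - v| := by
  rcases le_total u v with hle | hle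
  · have habs : |u - v| = v - u := by rw [abs_sub_comm]; exact abs_of_nonneg (by linarith)
    have := negMulLog_diff_le hu (t := v - u) (by linarith) (by linarith)
      (by rw [← habs]; exact h)
    rw [habs]
    have e : u + (v - u) = v := by ring
    rw [e] at this
    rwa [abs_sub_comm]
  · have habs : |u - v| = u - v := abs_of_nonneg (by linarith)
    have := negMulLog_diff_le hv (t := u - v) (by linarith) (by linarith)
      (by rw [← habs]; exact h)
    rw [habs]
    have e : v + (u - v) = u := by ring
    rw [e] at this
    exact this

lemma sum_negMulLog_le_jensen {n : ℕ} (hn : 0 < n) (δ : Fin n → ℝ) (hδ : ∀ i, 0 ≤ δ i) :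
    ∑ i, Real.negMulLog (δ i) ≤ n * Real.negMulLog ((∑ i, δ i)/n) := by
  have hn0 : (0:ℝ) < n := by positivity
  have hw : ∑ _i : Fin n, 1/(n:ℝ) = 1 := by
    rw [Finset.sum_const, Finset.card_univ, Fintype.card_fin, nsmul_eq_mul]
    field_simp
  have hj := Real.concaveOn_negMulLog.le_map_sum (t := Finset.univ)
    (w := fun _ : Fin n => 1/(n:ℝ)) (p := δ)
    (fun i _ => by positivity) hw (fun i _ => hδ i)
  simp only [smul_eq_mul] at hj
  have e1 : ∑ i, 1/(n:ℝ) * Real.negMulLog (δ i) = (1/n) * ∑ i, Real.negMulLog (δ i) := by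
    rw [Finset.mul_sum]
  have e2 : ∑ i, 1/(n:ℝ) * δ i = (∑ i, δ i)/n := by
    rw [← Finset.mul_sum]; ring
  rw [e1, e2] at hj
  calc ∑ i, Real.negMulLog (δ i) = n * ((1/n) * ∑ i, Real.negMulLog (δ i)) := by
        field_simp
    _ ≤ n * Real.negMulLog ((∑ i, δ i)/n) := by
        exact mul_le_mul_of_nonneg_left hj hn0.le

lemma entropy_perturb {n : ℕ} (hn : 2 ≤ n) {τ : Matrix (Fin n) (Fin n) ℂ}
    (hτ : τ.PosSemidef) (htr : ∑ i, hτ.1.eigenvalues i ≤ 1)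
    {ε : ℝ} (hε0 : 0 < ε) (hεe : ε ≤ 1 / (Real.exp 1 * ((n : ℝ) - 1))) :
    |vnEntropy ((1 - ε) • τ + (ε / n) • (1 : Matrix (Fin n) (Fin n) ℂ)) - vnEntropy τ|
      ≤ ε * ((n:ℝ) - 1) * Real.log ((n:ℝ) / (ε * ((n:ℝ) - 1))) := by
  have hn0 : (0:ℝ) < n := by positivity
  have hn1 : (1:ℝ) ≤ (n:ℝ) - 1 := by
    have : (2:ℝ) ≤ n := by exact_mod_cast hn
    linarith
  have he1 : (0:ℝ) < Real.exp 1 := Real.exp_pos 1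
  have hae : ε * ((n:ℝ) - 1) ≤ (Real.exp 1)⁻¹ := by
    rw [div_eq_inv_mul, mul_inv] at hεe
    calc ε * ((n:ℝ) - 1) ≤ ((Real.exp 1)⁻¹ * ((n:ℝ)-1)⁻¹ * 1) * ((n:ℝ)-1) := by
          rw [mul_one]
          exact mul_le_mul_of_nonneg_right (by simpa using hεe) (by linarith)
      _ = (Real.exp 1)⁻¹ * (((n:ℝ)-1)⁻¹ * ((n:ℝ)-1)) := by ring
      _ = (Real.exp 1)⁻¹ := by rw [inv_mul_cancel₀ (by linarith)]; ring
  have hεinv : ε ≤ (Real.exp 1)⁻¹ :=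
    le_trans (by nlinarith) hae
  have hε1 : ε < 1 := lt_of_le_of_lt hεinv (by
    rw [inv_lt_one_iff₀]; right; exact lt_of_lt_of_le (by norm_num) (Real.add_one_le_exp 1))
  set x := hτ.1.eigenvalues with hx
  have hx0 : ∀ i, 0 ≤ x i := fun i => hτ.eigenvalues_nonneg i
  have hx1 : ∀ i, x i ≤ 1 := by
    intro i
    refine le_trans ?_ htr
    exact Finset.single_le_sum (fun j _ => hx0 j) (Finset.mem_univ i)
  set B := (1 - ε) • τ + (ε / n) • (1 : Matrix (Fin n) (Fin n) ℂ) with hBdef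
  have hB : B.IsHermitian := by
    apply Matrix.IsHermitian.add
    · show ((1 - ε) • τ)ᴴ = _
      rw [Matrix.conjTranspose_smul, hτ.1.eq, star_trivial]
    · show ((ε / (n:ℝ)) • (1 : Matrix (Fin n) (Fin n) ℂ))ᴴ = _
      rw [Matrix.conjTranspose_smul, Matrix.isHermitian_one.eq, star_trivial]
  have hEτ : vnEntropy τ = ∑ i, Real.negMulLog (x i) := by
    rw [vnEntropy, dif_pos hτ.1]
    rw [← Finset.sum_neg_distrib]
    exact Finset.sum_congr rfl (fun i _ => by rw [Real.negMulLog]; ring)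
  have hEB : vnEntropy B = ∑ i, Real.negMulLog ((1 - ε) * x i + ε / n) := by
    rw [vnEntropy, dif_pos hB, ← Finset.sum_neg_distrib]
    have e : ∑ i, -(hB.eigenvalues i * Real.log (hB.eigenvalues i))
        = ∑ i, Real.negMulLog (hB.eigenvalues i) :=
      Finset.sum_congr rfl (fun i _ => by rw [Real.negMulLog]; ring)
    rw [e]
    exact sum_phi_eig_affine hτ.1 (1 - ε) (ε / n) hBdef hB Real.negMulLog
  set δ : Fin n → ℝ := fun i => |((1 - ε) * x i + ε / n) - x i| with hδdef
  have hδ0 : ∀ i, 0 ≤ δ i := fun i => abs_nonneg _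
  have hδe : ∀ i, δ i ≤ (Real.exp 1)⁻¹ := by
    intro i
    have h1 : ((1 - ε) * x i + ε / n) - x i = ε * (1/n - x i) := by field_simp; ring
    rw [hδdef]
    simp only [h1, abs_mul, abs_of_pos hε0]
    have h2 : |1/(n:ℝ) - x i| ≤ 1 := by
      rw [abs_le]
      constructor
      · have : (0:ℝ) < 1/n := by positivity
        nlinarith [hx1 i]
      · have : (1:ℝ)/n ≤ 1 := by
          rw [div_le_one hn0]; exact_mod_cast le_trans (by norm_num) hn
        nlinarith [hx0 i]
    calc ε * |1/(n:ℝ) - x i| ≤ ε * 1 := mul_le_mul_of_nonneg_left h2 hε0.le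
      _ = ε := mul_one ε
      _ ≤ _ := hεinv
  have hstep1 : |vnEntropy B - vnEntropy τ| ≤ ∑ i, Real.negMulLog (δ i) := by
    rw [hEτ, hEB, ← Finset.sum_sub_distrib]
    refine le_trans (Finset.abs_sum_le_sum_abs _ _) (Finset.sum_le_sum fun i _ => ?_)
    refine negMulLog_abs_diff ?_ (hx0 i) ?_ (hx1 i) (hδe i)
    · have : (0:ℝ) ≤ ε/n := by positivity
      nlinarith [hx0 i]
    · have hn1' : (1:ℝ) ≤ n := by exact_mod_cast le_trans (by norm_num) hn
      have h1 : ε/(n:ℝ) ≤ ε := by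
        rw [div_le_iff₀ hn0]; nlinarith
      nlinarith [hx1 i, hx0 i, hε1.le]
  -- sum of deviations
  have hs : ∑ i, δ i ≤ ε * ((n:ℝ) - 1) := by
    have h1 : ∀ i, δ i = ε * |x i - 1/(n:ℝ)| := by
      intro i
      have e : ((1 - ε) * x i + ε / n) - x i = ε * (1/n - x i) := by field_simp; ring
      rw [hδdef]
      simp only [e, abs_mul, abs_of_pos hε0, abs_sub_comm (1/(n:ℝ)) (x i)]
    rw [Finset.sum_congr rfl (fun i _ => h1 i), ← Finset.mul_sum]
    have h2 := sum_abs_dev hn x hx0 htr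
    calc ε * ∑ i, |x i - 1/(n:ℝ)| ≤ ε * (2*((n:ℝ)-1)/n) :=
          mul_le_mul_of_nonneg_left h2 hε0.le
      _ ≤ ε * ((n:ℝ) - 1) := by
          apply mul_le_mul_of_nonneg_left _ hε0.le
          rw [div_le_iff₀ hn0]
          nlinarith
  set a := ε * ((n:ℝ) - 1) with hadef
  have ha0 : 0 < a := by positivity
  have hstep2 : ∑ i, Real.negMulLog (δ i) ≤ (n:ℝ) * Real.negMulLog (a / n) := by
    refine le_trans (sum_negMulLog_le_jensen (by omega) δ hδ0) ?_
    apply mul_le_mul_of_nonneg_left _ hn0.le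
    apply negMulLog_mono (by positivity) (by gcongr)
    calc a / n ≤ a / 1 := by
          gcongr
          exact_mod_cast le_trans (by norm_num) hn
      _ = a := div_one a
      _ ≤ (Real.exp 1)⁻¹ := hae
  have hfinal : (n:ℝ) * Real.negMulLog (a / n) = a * Real.log ((n:ℝ) / a) := by
    rw [Real.negMulLog, Real.log_div (by positivity) (by positivity),
      Real.log_div (by positivity) (by positivity)]
    field_simp
    ring
  calc |vnEntropy B - vnEntropy τ| ≤ ∑ i, Real.negMulLog (δ i) := hstep1
    _ ≤ (n:ℝ) * Real.negMulLog (a / n) := hstep2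
    _ = a * Real.log ((n:ℝ) / a) := hfinal

set_option maxHeartbeats 1000000 in
/-- Continuity of the objective in the perturbation parameter: for a
density matrix `ρ`, a CPTNI map `G` into dimension `d' ≥ 2`, a pinching channel
`Z`, and `0 < ε ≤ 1/(e (d'−1))`, with `f(ρ) = H(Z(G(ρ))) − H(G(ρ))`,
`G_ε(ρ) = (1−ε) G(ρ) + (ε/d') I`, `f_ε(ρ) = H(Z(G_ε(ρ))) − H(G_ε(ρ))`, and
`ζ_ε = 2 ε (d'−1) log(d'/(ε(d'−1)))`, one has `|f(ρ) − f_ε(ρ)| ≤ ζ_ε`. -/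
theorem objective_continuity_in_epsilon
    {d d' m p : ℕ} (hd' : 2 ≤ d')
    (K : Fin m → Matrix (Fin d') (Fin d) ℂ)
    (hK : ((1 : Matrix (Fin d) (Fin d) ℂ) - ∑ i, (K i)ᴴ * K i).PosSemidef)
    (G : Matrix (Fin d) (Fin d) ℂ → Matrix (Fin d') (Fin d') ℂ)
    (hG : G = fun X => ∑ i, K i * X * (K i)ᴴ)
    (P : Fin p → Matrix (Fin d') (Fin d') ℂ)
    (hP1 : ∀ j, (P j)ᴴ = P j) (hP2 : ∀ j, P j * P j = P j)
    (hP3 : ∀ j k, j ≠ k → P j * P k = 0)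
    (hP4 : ∑ j, P j = 1)
    (Z : Matrix (Fin d') (Fin d') ℂ → Matrix (Fin d') (Fin d') ℂ)
    (hZ : Z = fun X => ∑ j, P j * X * P j)
    (ρ : Matrix (Fin d) (Fin d) ℂ) (hρ : ρ.PosSemidef) (hρ1 : ρ.trace = 1)
    (ε : ℝ) (hε0 : 0 < ε) (hεe : ε ≤ 1 / (Real.exp 1 * ((d' : ℝ) - 1)))
    (f fε : Matrix (Fin d) (Fin d) ℂ → ℝ)
    (hf : f = fun X => vnEntropy (Z (G X)) - vnEntropy (G X))
    (Gε : Matrix (Fin d) (Fin d) ℂ → Matrix (Fin d') (Fin d') ℂ)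
    (hGε : Gε = fun X => (1 - ε) • G X + (ε / d') • (1 : Matrix (Fin d') (Fin d') ℂ))
    (hfε : fε = fun X => vnEntropy (Z (Gε X)) - vnEntropy (Gε X))
    (ζ : ℝ) (hζ : ζ = 2 * ε * ((d' : ℝ) - 1) * Real.log ((d' : ℝ) / (ε * ((d' : ℝ) - 1)))) :
    |f ρ - fε ρ| ≤ ζ := by
  subst hf hfε hGε hG hZ hζ
  beta_reduce
  set σ : Matrix (Fin d') (Fin d') ℂ := ∑ i, K i * ρ * (K i)ᴴ with hσdef
  have hσ : σ.PosSemidef := by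
    refine Finset.sum_induction (fun i => K i * ρ * (K i)ᴴ) (fun A => A.PosSemidef)
      (fun A B hA hB => hA.add hB) Matrix.PosSemidef.zero (fun i _ => ?_)
    exact hρ.mul_mul_conjTranspose_same (K i)
  set Zσ : Matrix (Fin d') (Fin d') ℂ := ∑ j, P j * σ * P j with hZσdef
  have hZσ : Zσ.PosSemidef := by
    refine Finset.sum_induction (fun j => P j * σ * P j) (fun A => A.PosSemidef)
      (fun A B hA hB => hA.add hB) Matrix.PosSemidef.zero (fun j _ => ?_)
    have := hσ.mul_mul_conjTranspose_same (P j)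
    rwa [hP1 j] at this
  -- traces
  have htrZσ : Zσ.trace = σ.trace := by
    rw [hZσdef, Matrix.trace_sum]
    have e : ∀ j, (P j * σ * P j).trace = (P j * σ).trace := by
      intro j
      rw [Matrix.trace_mul_cycle, hP2 j]
    rw [Finset.sum_congr rfl (fun j _ => e j), ← Matrix.trace_sum, ← Finset.sum_mul, hP4, one_mul]
  -- trace σ ≤ 1
  set N := (1 : Matrix (Fin d) (Fin d) ℂ) - ∑ i, (K i)ᴴ * K i with hNdef
  obtain ⟨S, hSherm, hSS⟩ : ∃ S : Matrix (Fin d) (Fin d) ℂ, Sᴴ = S ∧ S * S = N := by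
    open scoped MatrixOrder in
    exact ⟨CFC.sqrt N, (Matrix.nonneg_iff_posSemidef.mp (CFC.sqrt_nonneg N)).1,
      CFC.sqrt_mul_sqrt_self N hK.nonneg⟩
  have hSρS : (S * ρ * Sᴴ).PosSemidef := hρ.mul_mul_conjTranspose_same S
  rw [hSherm] at hSρS
  have hkey : σ.trace + (S * ρ * S).trace = 1 := by
    have e1 : σ.trace = ((∑ i, (K i)ᴴ * K i) * ρ).trace := by
      rw [hσdef, Matrix.trace_sum, Finset.sum_mul, Matrix.trace_sum]
      exact Finset.sum_congr rfl (fun i _ => by rw [Matrix.trace_mul_cycle])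
    have e2 : (S * ρ * S).trace = (N * ρ).trace := by
      rw [Matrix.trace_mul_cycle, hSS]
    rw [e1, e2, ← Matrix.trace_add, ← Matrix.add_mul, hNdef]
    rw [add_sub_cancel, one_mul, hρ1]
  have hT1 : ∑ i, hσ.1.eigenvalues i ≤ 1 := by
    have h1 := trace_eq_sum_eig hσ.1
    have h2 := trace_eq_sum_eig hSρS.1
    rw [h1, h2] at hkey
    have hT2 : 0 ≤ ∑ i, hSρS.1.eigenvalues i :=
      Finset.sum_nonneg (fun i _ => hSρS.eigenvalues_nonneg i)
    have hreal : (∑ i, hσ.1.eigenvalues i) + (∑ i, hSρS.1.eigenvalues i) = 1 := by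
      exact_mod_cast hkey
    linarith
  have hTZ : ∑ i, hZσ.1.eigenvalues i ≤ 1 := by
    have h1 := trace_eq_sum_eig hZσ.1
    have h2 := trace_eq_sum_eig hσ.1
    rw [h1, h2] at htrZσ
    rw [Complex.ofReal_inj.mp htrZσ]
    exact hT1
  have hZGε : (∑ j, P j * ((1 - ε) • σ + (ε / (d':ℝ)) • (1 : Matrix (Fin d') (Fin d') ℂ)) * P j)
      = (1 - ε) • Zσ + (ε / (d':ℝ)) • (1 : Matrix (Fin d') (Fin d') ℂ) := by
    have e : ∀ j, P j * ((1 - ε) • σ + (ε / (d':ℝ)) • (1 : Matrix (Fin d') (Fin d') ℂ)) * P j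
        = (1 - ε) • (P j * σ * P j) + (ε / (d':ℝ)) • P j := by
      intro j
      rw [Matrix.mul_add, Matrix.add_mul, Matrix.mul_smul, Matrix.mul_smul,
        Matrix.smul_mul, Matrix.smul_mul, mul_one, hP2 j]
    rw [Finset.sum_congr rfl (fun j _ => e j), Finset.sum_add_distrib,
      ← Finset.smul_sum, ← Finset.smul_sum, hP4]
  have hhalf1 := entropy_perturb hd' hσ hT1 hε0 hεe
  have hhalf2 := entropy_perturb hd' hZσ hTZ hε0 hεe
  rw [hZGε]
  have e2h : 2 * ε * ((d':ℝ) - 1) * Real.log ((d':ℝ) / (ε * ((d':ℝ) - 1)))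
      = ε * ((d':ℝ) - 1) * Real.log ((d':ℝ) / (ε * ((d':ℝ) - 1)))
      + ε * ((d':ℝ) - 1) * Real.log ((d':ℝ) / (ε * ((d':ℝ) - 1))) := by ring
  rw [e2h, abs_le] at *
  obtain ⟨a1, a2⟩ := hhalf1
  obtain ⟨b1, b2⟩ := hhalf2
  constructor <;> linarith
end

section
/- Let Γ_1,…,Γ_n be Hermitian d×d complex matrices and γ_1,…,γ_n real numbers, let S be the corresponding constraint set, and assume every element of S has trace 1. Let G be a CPTNI map from d×d to d'×d' complex matrices with d' ≥ 2, let Z be a pinching channel on d'×d' complex matrices, and let ε satisfy 0 < ε ≤ 1/(e·(d'−1)). Define f, f_ε and ζ_ε as follows: f(ρ) = H(Z(G(ρ))) − H(G(ρ)), G_ε(ρ) = (1−ε)·G(ρ) + (ε/d')·I_{d'}, f_ε(ρ) = H(Z(G_ε(ρ))) − H(G_ε(ρ)), ζ_ε = 2ε(d'−1)·log(d'/(ε(d'−1))). If ρ* ∈ S satisfies f(ρ*) ≤ f(σ) for all σ ∈ S, and ρ_ε* ∈ S satisfies f_ε(ρ_ε*) ≤ f_ε(σ) for all σ ∈ S,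 then |f(ρ*) − f_ε(ρ_ε*)| ≤ ζ_ε. -/
open scoped BigOperators ComplexOrder Matrix

section helpers
open Real

lemma eta_tangent {x y : ℝ} (hx : 0 < x) (hy : 0 < y) :
    Real.negMulLog y ≤ Real.negMulLog x + (-(Real.log x) - 1) * (y - x) := by
  have h1 : Real.log (x / y) ≤ x / y - 1 := Real.log_le_sub_one_of_pos (div_pos hx hy)
  rw [Real.log_div hx.ne' hy.ne'] at h1
  have h2 : y * (Real.log x - Real.log y) ≤ x - y := by
    have := mul_le_mul_of_nonneg_left h1 hy.le
    calc y * (Real.log x - Real.log y) ≤ y * (x / y - 1) := this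
    _ = x - y := by field_simp
  simp only [Real.negMulLog]
  nlinarith [h2]

lemma eta_mono {u v : ℝ} (h0 : 0 ≤ u) (huv : u ≤ v) (hv : v ≤ (Real.exp 1)⁻¹) :
    Real.negMulLog u ≤ Real.negMulLog v := by
  have hv1 : v ≤ 1 := hv.trans (by
    rw [inv_le_one_iff₀]; right; linarith [Real.add_one_le_exp (1:ℝ)])
  rcases eq_or_lt_of_le h0 with h | hu
  · rw [← h, Real.negMulLog_zero]
    exact Real.negMulLog_nonneg (h0.trans huv) hv1
  · have hvpos : 0 < v := lt_of_lt_of_le hu huv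
    have hlv : Real.log v ≤ -1 := by
      have := Real.log_le_log hvpos hv
      rwa [Real.log_inv, Real.log_exp] at this
    have h1 : Real.log (v / u) ≤ v / u - 1 := Real.log_le_sub_one_of_pos (div_pos hvpos hu)
    rw [Real.log_div hvpos.ne' hu.ne'] at h1
    have h2 : u * (Real.log v - Real.log u) ≤ v - u := by
      have := mul_le_mul_of_nonneg_left h1 hu.le
      calc u * (Real.log v - Real.log u) ≤ u * (v / u - 1) := this
      _ = v - u := by field_simp
    simp only [Real.negMulLog]
    nlinarith [h2, hlv, sub_nonneg.mpr huv]

lemma eta_subadd {a b : ℝ} (ha : 0 ≤ a) (hb : 0 ≤ b) :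
    Real.negMulLog (a + b) ≤ Real.negMulLog a + Real.negMulLog b := by
  rcases eq_or_lt_of_le ha with h | ha'
  · simp [← h]
  rcases eq_or_lt_of_le hb with h | hb'
  · simp [← h]
  have hla : Real.log a ≤ Real.log (a + b) := Real.log_le_log ha' (by linarith)
  have hlb : Real.log b ≤ Real.log (a + b) := Real.log_le_log hb' (by linarith)
  simp only [Real.negMulLog]
  nlinarith [hla, hlb]

set_option maxHeartbeats 1600000 in
lemma entropy_sum_perturb {d' : ℕ} {ε : ℝ} (hd' : 2 ≤ d') (hε0 : 0 < ε)
    (hεe : ε ≤ 1 / (Real.exp 1 * ((d' : ℝ) - 1)))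
    (lam : Fin d' → ℝ) (hpos : ∀ i, 0 ≤ lam i) (hsum : ∑ i, lam i ≤ 1) :
    |∑ i, (Real.negMulLog ((1 - ε) * lam i + ε / d') - Real.negMulLog (lam i))| ≤
      ε * ((d' : ℝ) - 1) * Real.log ((d' : ℝ) / (ε * ((d' : ℝ) - 1))) := by
  have hD : 2 ≤ (d' : ℝ) := by exact_mod_cast hd'
  set D : ℝ := (d' : ℝ) with hDdef
  have hD0 : 0 < D := by linarith
  have hD1 : 1 ≤ D - 1 := by linarith
  have he1 : (1 : ℝ) < Real.exp 1 := by linarith [Real.add_one_le_exp (1:ℝ)]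
  have hεD : ε * (D - 1) ≤ (Real.exp 1)⁻¹ := by
    rw [one_div] at hεe
    calc ε * (D - 1) ≤ (Real.exp 1 * (D - 1))⁻¹ * (D - 1) := by
          apply mul_le_mul_of_nonneg_right hεe (by linarith)
    _ = (Real.exp 1)⁻¹ := by
          rw [mul_inv, mul_assoc, inv_mul_cancel₀ (by linarith), mul_one]
  have hε1 : ε < 1 := by
    calc ε = ε * 1 := (mul_one ε).symm
    _ ≤ ε * (D - 1) := by apply mul_le_mul_of_nonneg_left hD1 hε0.le
    _ ≤ (Real.exp 1)⁻¹ := hεD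
    _ < 1 := by rw [inv_lt_one_iff₀]; right; exact he1
  set L : ℝ := Real.log (D / (ε * (D - 1))) with hLdef
  have hargpos : 0 < D / (ε * (D - 1)) := by positivity
  have hLD : 1 + Real.log D ≤ L := by
    have h1 : Real.exp 1 * D ≤ D / (ε * (D - 1)) := by
      rw [le_div_iff₀ (by positivity)]
      calc Real.exp 1 * D * (ε * (D - 1)) = (ε * (D-1) * Real.exp 1) * D := by ring
      _ ≤ 1 * D := by
            apply mul_le_mul_of_nonneg_right _ hD0.le
            have := mul_le_mul_of_nonneg_right hεD (Real.exp_pos 1).le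
            rwa [inv_mul_cancel₀ (Real.exp_pos 1).ne'] at this
      _ = D := one_mul D
    calc 1 + Real.log D = Real.log (Real.exp 1 * D) := by
          rw [Real.log_mul (Real.exp_pos 1).ne' hD0.ne', Real.log_exp]
    _ ≤ L := Real.log_le_log (by positivity) h1
  have hlogD0 : 0 ≤ Real.log D := Real.log_nonneg (by linarith)
  have hL1 : 1 ≤ L := by linarith
  have hlogD1 : Real.log (D - 1) ≤ D - 2 := by
    have := Real.log_le_sub_one_of_pos (show (0:ℝ) < D - 1 by linarith)
    linarith
  have hlogsplit : Real.log (D / ε) = L + Real.log (D - 1) := by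
    have h : D / ε = (D / (ε * (D - 1))) * (D - 1) := by field_simp
    rw [h, Real.log_mul hargpos.ne' (by linarith)]
  have ha_eq : Real.negMulLog (ε / D) = (ε / D) * Real.log (D / ε) := by
    rw [Real.negMulLog, Real.log_div hε0.ne' hD0.ne', Real.log_div hD0.ne' hε0.ne']
    ring
  have hlogDε : 0 ≤ Real.log (D / ε) := by
    apply Real.log_nonneg
    rw [le_div_iff₀ hε0]; nlinarith
  have haa : 0 ≤ Real.negMulLog (ε / D) := by rw [ha_eq]; positivity
  have hεDe : ε / D ≤ (Real.exp 1)⁻¹ := by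
    calc ε / D ≤ ε * (D - 1) := by
          rw [div_le_iff₀ hD0]
          nlinarith [mul_le_mul_of_nonneg_left (show (1:ℝ) ≤ (D-1)*D by nlinarith) hε0.le]
    _ ≤ (Real.exp 1)⁻¹ := hεD
  have hlam1 : ∀ i, lam i ≤ 1 := by
    intro i
    calc lam i ≤ ∑ j, lam j := Finset.single_le_sum (fun j _ => hpos j) (Finset.mem_univ i)
    _ ≤ 1 := hsum
  have hsmall : ∀ i, lam i ≤ 1 / D →
      Real.negMulLog ((1 - ε) * lam i + ε / D) - Real.negMulLog (lam i) ≤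
        Real.negMulLog (ε / D) := by
    intro i hle
    have hδ : 0 ≤ ε * (1 / D - lam i) := by
      apply mul_nonneg hε0.le; linarith
    have hrw : (1 - ε) * lam i + ε / D = lam i + ε * (1 / D - lam i) := by
      field_simp; ring
    rw [hrw]
    have h1 := eta_subadd (hpos i) hδ
    have h2 : Real.negMulLog (ε * (1 / D - lam i)) ≤ Real.negMulLog (ε / D) := by
      apply eta_mono hδ _ hεDe
      rw [div_eq_mul_one_div]
      nlinarith [hpos i, hε0]
    linarith
  have hbig : ∀ i, 1 / D < lam i →
      Real.negMulLog ((1 - ε) * lam i + ε / D) - Real.negMulLog (lam i) ≤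
        ε * (lam i - 1 / D) := by
    intro i hgt
    have hlpos : 0 < lam i := lt_trans (by positivity) hgt
    have hμpos : 0 < (1 - ε) * lam i + ε / D := by
      have : 0 < (1 - ε) * lam i := mul_pos (by linarith) hlpos
      positivity
    have h1 := eta_tangent hlpos hμpos
    have hlog : Real.log (lam i) ≤ 0 := Real.log_nonpos hlpos.le (hlam1 i)
    have hd : 0 ≤ ε * (lam i - 1 / D) := by
      apply mul_nonneg hε0.le; linarith
    have h2 : (-(Real.log (lam i)) - 1) * ((1 - ε) * lam i + ε / D - lam i) =
        Real.log (lam i) * (ε * (lam i - 1 / D)) + ε * (lam i - 1 / D) := by ring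
    have h3 : Real.log (lam i) * (ε * (lam i - 1 / D)) ≤ 0 :=
      mul_nonpos_of_nonpos_of_nonneg hlog hd
    rw [h2] at h1
    linarith [h1, h3]
  rw [abs_le]
  constructor
  · -- lower bound
    have hterm : ∀ i, -(ε * Real.negMulLog (lam i)) ≤
        Real.negMulLog ((1 - ε) * lam i + ε / D) - Real.negMulLog (lam i) := by
      intro i
      have hc := Real.concaveOn_negMulLog.2 (Set.mem_Ici.mpr (hpos i))
        (Set.mem_Ici.mpr (show (0:ℝ) ≤ 1 / D by positivity))
        (by linarith : (0:ℝ) ≤ 1 - ε) hε0.le (by ring)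
      simp only [smul_eq_mul] at hc
      have hrw : (1 - ε) * lam i + ε * (1 / D) = (1 - ε) * lam i + ε / D := by ring
      rw [hrw] at hc
      have hu : 0 ≤ Real.negMulLog (1 / D) :=
        Real.negMulLog_nonneg (by positivity) (by rw [div_le_one hD0]; linarith)
      have hexp : (1 - ε) * Real.negMulLog (lam i) =
          Real.negMulLog (lam i) - ε * Real.negMulLog (lam i) := by ring
      rw [hexp] at hc
      have h0 : 0 ≤ ε * Real.negMulLog (1 / D) := mul_nonneg hε0.le hu
      linarith [hc, h0]
    have hent1 : ∀ i, Real.negMulLog (lam i) ≤ 1 / D - lam i + lam i * Real.log D := by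
      intro i
      rcases eq_or_lt_of_le (hpos i) with h | hlpos
      · rw [← h, Real.negMulLog_zero]
        have h9 : (0:ℝ) ≤ 1 / D := by positivity
        linarith
      · have h := Real.log_le_sub_one_of_pos (show 0 < (D * lam i)⁻¹ by positivity)
        rw [Real.log_inv, Real.log_mul hD0.ne' hlpos.ne'] at h
        have hinv : (D * lam i)⁻¹ * lam i = 1 / D := by
          field_simp
        simp only [Real.negMulLog]
        have hm := mul_le_mul_of_nonneg_left h (hpos i)
        have e1 : lam i * (-(Real.log D + Real.log (lam i))) =
            -lam i * Real.log (lam i) - lam i * Real.log D := by ring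
        have e2 : lam i * ((D * lam i)⁻¹ - 1) = (D * lam i)⁻¹ * lam i - lam i := by ring
        rw [e1, e2, hinv] at hm
        linarith [hm]
    have hent : ∑ i, Real.negMulLog (lam i) ≤ 1 + Real.log D := by
      have h1 : ∑ i, Real.negMulLog (lam i) ≤
          ∑ i, (1 / D - lam i + lam i * Real.log D) := Finset.sum_le_sum fun i _ => hent1 i
      have h2 : ∑ i, (1 / D - lam i + lam i * Real.log D) =
          D * (1 / D) - (∑ i, lam i) + (∑ i, lam i) * Real.log D := by
        rw [Finset.sum_add_distrib, Finset.sum_sub_distrib, Finset.sum_const,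
          Finset.card_univ, Fintype.card_fin, ← Finset.sum_mul, nsmul_eq_mul]
      have ht0 : 0 ≤ ∑ i, lam i := Finset.sum_nonneg fun i _ => hpos i
      have hDD : D * (1 / D) = 1 := by field_simp
      have h5 : (∑ i, lam i) * Real.log D ≤ Real.log D :=
        mul_le_of_le_one_left hlogD0 hsum
      linarith [h1, h2, ht0, h5, hDD]
    have h3 : -(ε * (1 + Real.log D)) ≤
        ∑ i, (Real.negMulLog ((1 - ε) * lam i + ε / D) - Real.negMulLog (lam i)) := by
      calc -(ε * (1 + Real.log D)) ≤ -(ε * ∑ i, Real.negMulLog (lam i)) := by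
            apply neg_le_neg
            exact mul_le_mul_of_nonneg_left hent hε0.le
      _ = ∑ i, -(ε * Real.negMulLog (lam i)) := by
            rw [Finset.mul_sum]
            exact (Finset.sum_neg_distrib _).symm
      _ ≤ _ := Finset.sum_le_sum fun i _ => hterm i
    have h4 : ε * (1 + Real.log D) ≤ ε * ((D - 1) * L) := by
      apply mul_le_mul_of_nonneg_left _ hε0.le
      have hq : (D - 1) * L = L + (D - 2) * L := by ring
      have hq2 : 0 ≤ (D - 2) * L :=
        mul_nonneg (by linarith) (by linarith)
      linarith [hLD, hq, hq2]
    calc -(ε * (D - 1) * L) = -(ε * ((D-1) * L)) := by ring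
    _ ≤ -(ε * (1 + Real.log D)) := by linarith
    _ ≤ _ := h3
  · -- upper bound
    classical
    set B : Finset (Fin d') := Finset.univ.filter (fun i => 1 / D < lam i) with hBdef
    have hsplit : ∑ i, (Real.negMulLog ((1 - ε) * lam i + ε / D) - Real.negMulLog (lam i)) =
        (∑ i ∈ Bᶜ, (Real.negMulLog ((1 - ε) * lam i + ε / D) - Real.negMulLog (lam i))) +
        (∑ i ∈ B, (Real.negMulLog ((1 - ε) * lam i + ε / D) - Real.negMulLog (lam i))) :=
      (Finset.sum_compl_add_sum B _).symm
    have h1 : ∑ i ∈ Bᶜ, (Real.negMulLog ((1 - ε) * lam i + ε / D) - Real.negMulLog (lam i)) ≤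
        (Bᶜ.card : ℝ) * Real.negMulLog (ε / D) := by
      have h1a : ∀ i ∈ Bᶜ, (Real.negMulLog ((1 - ε) * lam i + ε / D) - Real.negMulLog (lam i)) ≤
          Real.negMulLog (ε / D) := by
        intro i hi
        apply hsmall
        simp only [hBdef, Finset.mem_compl, Finset.mem_filter, Finset.mem_univ,
          true_and, not_lt] at hi
        exact hi
      have := Finset.sum_le_sum h1a
      rwa [Finset.sum_const, nsmul_eq_mul] at this
    have h2 : ∑ i ∈ B, (Real.negMulLog ((1 - ε) * lam i + ε / D) - Real.negMulLog (lam i)) ≤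
        ε * (∑ i ∈ B, lam i) - (B.card : ℝ) * (ε / D) := by
      have h2a : ∀ i ∈ B, (Real.negMulLog ((1 - ε) * lam i + ε / D) - Real.negMulLog (lam i)) ≤
          ε * (lam i - 1 / D) := by
        intro i hi
        apply hbig
        simp only [hBdef, Finset.mem_filter, Finset.mem_univ, true_and] at hi
        exact hi
      have h2b := Finset.sum_le_sum h2a
      have h2c : ∑ i ∈ B, ε * (lam i - 1 / D) =
          ε * (∑ i ∈ B, lam i) - (B.card : ℝ) * (ε / D) := by
        calc ∑ i ∈ B, ε * (lam i - 1 / D) = ∑ i ∈ B, (ε * lam i - ε / D) := by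
              apply Finset.sum_congr rfl
              intro i _
              ring
        _ = (∑ i ∈ B, ε * lam i) - ∑ i ∈ B, (ε / D) := Finset.sum_sub_distrib _ _
        _ = ε * (∑ i ∈ B, lam i) - (B.card : ℝ) * (ε / D) := by
              rw [Finset.sum_const, nsmul_eq_mul, ← Finset.mul_sum]
      rw [← h2c]
      exact h2b
    have hBl : ∑ i ∈ B, lam i ≤ 1 := by
      refine le_trans ?_ hsum
      exact Finset.sum_le_sum_of_subset_of_nonneg (Finset.subset_univ B) (fun i _ _ => hpos i)
    have h6 : Real.log (D - 1) ≤ (D - 2) * L := by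
      have h7 : 0 ≤ (D - 2) * (L - 1) := mul_nonneg (by linarith) (by linarith)
      nlinarith [hlogD1]
    by_cases hBe : B = ∅
    · have hcard : ((Bᶜ.card : ℕ) : ℝ) = D := by
        rw [hBe]
        simp [Finset.card_univ]
        exact hDdef.symm
      have hzero : ∑ i ∈ B, (Real.negMulLog ((1 - ε) * lam i + ε / D) -
          Real.negMulLog (lam i)) = 0 := by rw [hBe]; simp
      have e3 : D * Real.negMulLog (ε / D) = ε * (L + Real.log (D - 1)) := by
        rw [ha_eq, hlogsplit]
        field_simp
      have key : ε * (L + Real.log (D - 1)) ≤ ε * ((D - 1) * L) := by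
        apply mul_le_mul_of_nonneg_left _ hε0.le
        have hq : (D - 1) * L = L + (D - 2) * L := by ring
        linarith [h6]
      rw [hsplit, hzero, add_zero]
      calc _ ≤ (Bᶜ.card : ℝ) * Real.negMulLog (ε / D) := h1
      _ = D * Real.negMulLog (ε / D) := by rw [hcard]
      _ = ε * (L + Real.log (D - 1)) := e3
      _ ≤ ε * ((D - 1) * L) := key
      _ = ε * (D - 1) * L := by ring
    · have hm1 : 1 ≤ B.card := Finset.card_pos.mpr (Finset.nonempty_of_ne_empty hBe)
      have hmc : (1 : ℝ) ≤ (B.card : ℝ) := by exact_mod_cast hm1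
      have hnat : Bᶜ.card ≤ d' - 1 := by
        rw [Finset.card_compl, Fintype.card_fin]
        omega
      have hcc : (Bᶜ.card : ℝ) ≤ D - 1 := by
        have h8 : ((Bᶜ.card : ℕ) : ℝ) ≤ ((d' - 1 : ℕ) : ℝ) := Nat.cast_le.mpr hnat
        rw [Nat.cast_sub (by omega)] at h8
        simpa using h8
      have hup1 : (Bᶜ.card : ℝ) * Real.negMulLog (ε / D) ≤ (D - 1) * Real.negMulLog (ε / D) :=
        mul_le_mul_of_nonneg_right hcc haa
      have hup2 : ε * (∑ i ∈ B, lam i) ≤ ε := by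
        calc ε * (∑ i ∈ B, lam i) ≤ ε * 1 := mul_le_mul_of_nonneg_left hBl hε0.le
        _ = ε := mul_one ε
      have hup3 : ε / D ≤ (B.card : ℝ) * (ε / D) := by
        calc ε / D = 1 * (ε / D) := (one_mul _).symm
        _ ≤ (B.card : ℝ) * (ε / D) := by
              apply mul_le_mul_of_nonneg_right hmc (by positivity)
      have e4 : (D - 1) * Real.negMulLog (ε / D) + ε - ε / D =
          (ε / D) * ((D - 1) * (L + Real.log (D - 1) + 1)) := by
        rw [ha_eq, hlogsplit]
        field_simp
        ring
      have key2 : L + Real.log (D - 1) + 1 ≤ D * L := by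
        have hq : D * L = L + (D - 2) * L + L := by ring
        linarith [h6, hL1]
      have e5 : (ε / D) * ((D - 1) * (L + Real.log (D - 1) + 1)) ≤
          (ε / D) * ((D - 1) * (D * L)) := by
        apply mul_le_mul_of_nonneg_left _ (by positivity)
        exact mul_le_mul_of_nonneg_left key2 (by linarith)
      have e6 : (ε / D) * ((D - 1) * (D * L)) = ε * (D - 1) * L := by
        field_simp
      rw [hsplit]
      linarith [h1, h2, hup1, hup2, hup3, e4, e5, e6]

lemma charpoly_unitary_conj {k : ℕ} (U A : Matrix (Fin k) (Fin k) ℂ)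
    (hU : U ∈ Matrix.unitaryGroup (Fin k) ℂ) :
    (U * A * star U).charpoly = A.charpoly := by
  have hUU : U * star U = 1 := Matrix.mem_unitaryGroup_iff.mp hU
  set f : Matrix (Fin k) (Fin k) ℂ →+* Matrix (Fin k) (Fin k) (Polynomial ℂ) :=
    (Polynomial.C : ℂ →+* Polynomial ℂ).mapMatrix with hf
  have hcomm : ∀ M : Matrix (Fin k) (Fin k) (Polynomial ℂ),
      Matrix.scalar (Fin k) (Polynomial.X : Polynomial ℂ) * M =
        M * Matrix.scalar (Fin k) (Polynomial.X : Polynomial ℂ) := by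
    intro M
    exact Matrix.scalar_commute Polynomial.X (fun r => Commute.all _ r) M
  have hkey : Matrix.charmatrix (U * A * star U) = f U * Matrix.charmatrix A * f (star U) := by
    rw [Matrix.charmatrix, Matrix.charmatrix, Matrix.mul_sub, Matrix.sub_mul]
    congr 1
    · -- f U * scalar X * f (star U) = scalar X
      rw [← hcomm (f U), Matrix.mul_assoc, ← map_mul, hUU, map_one, Matrix.mul_one]
    · rw [hf, map_mul, map_mul]
  rw [Matrix.charpoly, Matrix.charpoly, hkey, Matrix.det_mul, Matrix.det_mul]
  have : f U * f (star U) = 1 := by rw [← map_mul, hUU, map_one]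
  have hdet : (f U).det * (f (star U)).det = 1 := by
    rw [← Matrix.det_mul, this, Matrix.det_one]
  calc (f U).det * (Matrix.charmatrix A).det * (f (star U)).det
      = (Matrix.charmatrix A).det * ((f U).det * (f (star U)).det) := by ring
  _ = (Matrix.charmatrix A).det := by rw [hdet, mul_one]

lemma charpoly_diagonal {k : ℕ} (w : Fin k → ℂ) :
    (Matrix.diagonal w).charpoly = ∏ i, (Polynomial.X - Polynomial.C (w i)) := by
  have h : Matrix.charmatrix (Matrix.diagonal w) =
      Matrix.diagonal (fun i => (Polynomial.X : Polynomial ℂ) - Polynomial.C (w i)) := by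
    ext i j : 2
    by_cases hij : i = j
    · subst hij
      simp
    · rw [Matrix.charmatrix_apply_ne _ _ _ hij, Matrix.diagonal_apply_ne _ hij,
        Matrix.diagonal_apply_ne _ hij]
      simp
  rw [Matrix.charpoly, h, Matrix.det_diagonal]

lemma roots_prod_X_sub_C' {k : ℕ} (w : Fin k → ℂ) :
    (∏ i, (Polynomial.X - Polynomial.C (w i))).roots = Finset.univ.val.map w := by
  rw [Finset.prod_eq_multiset_prod]
  rw [show Finset.univ.val.map (fun i => Polynomial.X - Polynomial.C (w i)) =
    (Finset.univ.val.map w).map (fun a => Polynomial.X - Polynomial.C a) by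
      rw [Multiset.map_map]; rfl]
  exact Polynomial.roots_multiset_prod_X_sub_C _

lemma sum_fn_eigenvalues {k : ℕ} (F : ℝ → ℝ) {A : Matrix (Fin k) (Fin k) ℂ}
    (hA : A.IsHermitian) {U : Matrix (Fin k) (Fin k) ℂ}
    (hU : U ∈ Matrix.unitaryGroup (Fin k) ℂ) {v : Fin k → ℝ}
    (hAv : A = U * Matrix.diagonal (fun i => ((v i : ℝ) : ℂ)) * star U) :
    ∑ i, F (hA.eigenvalues i) = ∑ i, F (v i) := by
  have h1 : A.charpoly = (Matrix.diagonal (fun i => ((hA.eigenvalues i : ℝ) : ℂ))).charpoly := by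
    conv_lhs => rw [hA.spectral_theorem]
    rw [← charpoly_unitary_conj (hA.eigenvectorUnitary : Matrix (Fin k) (Fin k) ℂ)
      (Matrix.diagonal (fun i => ((hA.eigenvalues i : ℝ) : ℂ)))
      hA.eigenvectorUnitary.2]
    rfl
  have h2 : A.charpoly = (Matrix.diagonal (fun i => ((v i : ℝ) : ℂ))).charpoly := by
    conv_lhs => rw [hAv]
    rw [charpoly_unitary_conj U _ hU]
  have h3 : ∏ i, (Polynomial.X - Polynomial.C ((hA.eigenvalues i : ℝ) : ℂ)) =
      ∏ i, (Polynomial.X - Polynomial.C ((v i : ℝ) : ℂ)) := by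
    rw [← charpoly_diagonal, ← charpoly_diagonal, ← h1, ← h2]
  have h4 : Finset.univ.val.map (fun i => ((hA.eigenvalues i : ℝ) : ℂ)) =
      Finset.univ.val.map (fun i => ((v i : ℝ) : ℂ)) := by
    rw [← roots_prod_X_sub_C', ← roots_prod_X_sub_C', h3]
  have h5 : Finset.univ.val.map hA.eigenvalues = Finset.univ.val.map v := by
    have := congrArg (Multiset.map Complex.re) h4
    rwa [Multiset.map_map, Multiset.map_map,
      show (Complex.re ∘ fun i => ((hA.eigenvalues i : ℝ) : ℂ)) = hA.eigenvalues by
        funext i; simp,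
      show (Complex.re ∘ fun i => ((v i : ℝ) : ℂ)) = v by funext i; simp] at this
  calc ∑ i, F (hA.eigenvalues i) = ((Finset.univ.val.map hA.eigenvalues).map F).sum := by
        rw [Multiset.map_map, Finset.sum_eq_multiset_sum]; rfl
  _ = ((Finset.univ.val.map v).map F).sum := by rw [h5]
  _ = ∑ i, F (v i) := by rw [Multiset.map_map, Finset.sum_eq_multiset_sum]; rfl

lemma vnEntropy_eq_sum {k : ℕ} {A : Matrix (Fin k) (Fin k) ℂ} (hA : A.IsHermitian) :
    vnEntropy A = ∑ i, Real.negMulLog (hA.eigenvalues i) := by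
  rw [vnEntropy, dif_pos hA, ← Finset.sum_neg_distrib]
  exact Finset.sum_congr rfl fun i _ => by simp [Real.negMulLog]

lemma trace_eq_sum_eigenvalues' {k : ℕ} {A : Matrix (Fin k) (Fin k) ℂ}
    (hA : A.IsHermitian) : A.trace = ∑ i, ((hA.eigenvalues i : ℝ) : ℂ) := by
  conv_lhs => rw [hA.spectral_theorem]
  set U : Matrix (Fin k) (Fin k) ℂ := (hA.eigenvectorUnitary : Matrix (Fin k) (Fin k) ℂ)
  have hUU : star U * U = 1 := Matrix.mem_unitaryGroup_iff'.mp hA.eigenvectorUnitary.2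
  rw [Unitary.conjStarAlgAut_apply, Matrix.trace_mul_comm, ← Matrix.mul_assoc, hUU, Matrix.one_mul, Matrix.trace_diagonal]
  rfl

lemma vnEntropy_perturb {k : ℕ} (hk : 2 ≤ k) {ε : ℝ} (hε0 : 0 < ε)
    (hεe : ε ≤ 1 / (Real.exp 1 * ((k : ℝ) - 1)))
    {A : Matrix (Fin k) (Fin k) ℂ} (hA : A.PosSemidef)
    (htr : A.trace.re ≤ 1) :
    |vnEntropy ((1 - ε) • A + (ε / k) • (1 : Matrix (Fin k) (Fin k) ℂ)) - vnEntropy A| ≤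
      ε * ((k : ℝ) - 1) * Real.log ((k : ℝ) / (ε * ((k : ℝ) - 1))) := by
  have hH : A.IsHermitian := hA.1
  set lam : Fin k → ℝ := hH.eigenvalues with hlam
  set U : Matrix (Fin k) (Fin k) ℂ := (hH.eigenvectorUnitary : Matrix (Fin k) (Fin k) ℂ) with hUdef
  have hU : U ∈ Matrix.unitaryGroup (Fin k) ℂ := hH.eigenvectorUnitary.2
  have hUU : U * star U = 1 := Matrix.mem_unitaryGroup_iff.mp hU
  set B : Matrix (Fin k) (Fin k) ℂ := (1 - ε) • A + (ε / k) • (1 : Matrix (Fin k) (Fin k) ℂ)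
    with hBdef
  have hdiag : ((1 - ε) : ℝ) • Matrix.diagonal (fun i => ((lam i : ℝ) : ℂ)) +
      ((ε / k : ℝ)) • (1 : Matrix (Fin k) (Fin k) ℂ) =
      Matrix.diagonal (fun i => (((1 - ε) * lam i + ε / k : ℝ) : ℂ)) := by
    rw [← Matrix.diagonal_one, ← Matrix.diagonal_smul, ← Matrix.diagonal_smul,
      Matrix.diagonal_add]
    congr 1
    funext i
    push_cast
    simp [Complex.real_smul]
  have hBdecomp : B = U * Matrix.diagonal (fun i => (((1 - ε) * lam i + ε / k : ℝ) : ℂ)) *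
      star U := by
    have hA' : A = U * Matrix.diagonal (fun i => ((lam i : ℝ) : ℂ)) * star U := by
      conv_lhs => rw [hH.spectral_theorem]
      rfl
    calc B = (1 - ε) • (U * Matrix.diagonal (fun i => ((lam i : ℝ) : ℂ)) * star U) +
        (ε / k) • (U * star U) := by rw [← hA', hUU, hBdef]
    _ = U * (((1 - ε) : ℝ) • Matrix.diagonal (fun i => ((lam i : ℝ) : ℂ)) +
        ((ε / k : ℝ)) • (1 : Matrix (Fin k) (Fin k) ℂ)) * star U := by
          rw [Matrix.mul_add, Matrix.add_mul]
          congr 1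
          · rw [mul_smul_comm, smul_mul_assoc]
          · rw [mul_smul_comm, smul_mul_assoc, mul_one]
    _ = _ := by rw [hdiag]
  have hB : B.IsHermitian := by
    rw [hBdecomp]
    have h1 : (Matrix.diagonal (fun i => (((1 - ε) * lam i + ε / k : ℝ) : ℂ))).IsHermitian := by
      rw [Matrix.IsHermitian, Matrix.diagonal_conjTranspose]
      congr 1
      funext i
      simp [Pi.star_def, Complex.conj_ofReal]
    rw [Matrix.IsHermitian, Matrix.star_eq_conjTranspose, Matrix.conjTranspose_mul,
      Matrix.conjTranspose_mul, Matrix.conjTranspose_conjTranspose, h1.eq,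
      Matrix.mul_assoc]
  have hEB : vnEntropy B = ∑ i, Real.negMulLog ((1 - ε) * lam i + ε / k) := by
    rw [vnEntropy_eq_sum hB]
    exact sum_fn_eigenvalues Real.negMulLog hB hU hBdecomp
  have hEA : vnEntropy A = ∑ i, Real.negMulLog (lam i) := vnEntropy_eq_sum hH
  have hpos : ∀ i, 0 ≤ lam i := hA.eigenvalues_nonneg
  have hsum : ∑ i, lam i ≤ 1 := by
    have h := trace_eq_sum_eigenvalues' hH
    have h2 : A.trace.re = ∑ i, lam i := by
      rw [h, Complex.re_sum]
      exact Finset.sum_congr rfl fun i _ => by simp [hlam]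
    linarith [htr, h2.symm.le, h2.le]
  have := entropy_sum_perturb hk hε0 hεe lam hpos hsum
  rw [hEB, hEA, ← Finset.sum_sub_distrib]
  exact this

lemma psd_trace_re_nonneg {k : ℕ} {A : Matrix (Fin k) (Fin k) ℂ} (hA : A.PosSemidef) :
    0 ≤ A.trace.re := by
  rw [trace_eq_sum_eigenvalues' hA.1, Complex.re_sum]
  apply Finset.sum_nonneg
  intro i _
  simpa using hA.eigenvalues_nonneg i

lemma psd_sum {k m : ℕ} (M : Fin m → Matrix (Fin k) (Fin k) ℂ)
    (h : ∀ i, (M i).PosSemidef) : (∑ i, M i).PosSemidef :=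
  Finset.sum_induction M Matrix.PosSemidef (fun _ _ ha hb => ha.add hb)
    Matrix.PosSemidef.zero (fun i _ => h i)

end helpers

/-- The optimal values of the original and perturbed problems are
within `ζ_ε` of each other: if `ρ*` minimizes `f` over the constraint set `S`
(all of whose elements have trace 1) and `ρ_ε*` minimizes `f_ε` over `S`, then
`|f(ρ*) − f_ε(ρ_ε*)| ≤ ζ_ε`. -/
theorem perturbed_optimal_values_close
    {d d' n m p : ℕ} (hd' : 2 ≤ d')
    (Γ : Fin n → Matrix (Fin d) (Fin d) ℂ) (hΓ : ∀ i, (Γ i).IsHermitian)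
    (γ : Fin n → ℝ)
    (S : Set (Matrix (Fin d) (Fin d) ℂ))
    (hS : S = {ρ | ρ.PosSemidef ∧ ∀ i, (Γ i * ρ).trace = (γ i : ℂ)})
    (hStrace : ∀ ρ ∈ S, ρ.trace = 1)
    (K : Fin m → Matrix (Fin d') (Fin d) ℂ)
    (hK : ((1 : Matrix (Fin d) (Fin d) ℂ) - ∑ i, (K i)ᴴ * K i).PosSemidef)
    (G : Matrix (Fin d) (Fin d) ℂ → Matrix (Fin d') (Fin d') ℂ)
    (hG : G = fun X => ∑ i, K i * X * (K i)ᴴ)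
    (P : Fin p → Matrix (Fin d') (Fin d') ℂ)
    (hP1 : ∀ j, (P j)ᴴ = P j) (hP2 : ∀ j, P j * P j = P j)
    (hP3 : ∀ j k, j ≠ k → P j * P k = 0)
    (hP4 : ∑ j, P j = 1)
    (Z : Matrix (Fin d') (Fin d') ℂ → Matrix (Fin d') (Fin d') ℂ)
    (hZ : Z = fun X => ∑ j, P j * X * P j)
    (ε : ℝ) (hε0 : 0 < ε) (hεe : ε ≤ 1 / (Real.exp 1 * ((d' : ℝ) - 1)))
    (f fε : Matrix (Fin d) (Fin d) ℂ → ℝ)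
    (hf : f = fun X => vnEntropy (Z (G X)) - vnEntropy (G X))
    (Gε : Matrix (Fin d) (Fin d) ℂ → Matrix (Fin d') (Fin d') ℂ)
    (hGε : Gε = fun X => (1 - ε) • G X + (ε / d') • (1 : Matrix (Fin d') (Fin d') ℂ))
    (hfε : fε = fun X => vnEntropy (Z (Gε X)) - vnEntropy (Gε X))
    (ζ : ℝ) (hζ : ζ = 2 * ε * ((d' : ℝ) - 1) * Real.log ((d' : ℝ) / (ε * ((d' : ℝ) - 1))))
    (ρstar : Matrix (Fin d) (Fin d) ℂ) (hρstar : ρstar ∈ S)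
    (hρstarMin : ∀ σ ∈ S, f ρstar ≤ f σ)
    (ρεstar : Matrix (Fin d) (Fin d) ℂ) (hρεstar : ρεstar ∈ S)
    (hρεstarMin : ∀ σ ∈ S, fε ρεstar ≤ fε σ) :
    |f ρstar - fε ρεstar| ≤ ζ := by
  -- the pointwise bound
  have key : ∀ ρ ∈ S, |f ρ - fε ρ| ≤ ζ := by
    intro ρ hρS
    have hρPSD : ρ.PosSemidef := by rw [hS] at hρS; exact hρS.1
    have hρtr : ρ.trace = 1 := hStrace ρ hρS
    -- σ = G ρ is PSD with re-trace ≤ 1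
    have hσPSD : (G ρ).PosSemidef := by
      rw [hG]
      exact psd_sum _ (fun i => hρPSD.mul_mul_conjTranspose_same (K i))
    have hσtr : (G ρ).trace.re ≤ 1 := by
      have h1 : (G ρ).trace = ((∑ i, (K i)ᴴ * K i) * ρ).trace := by
        rw [hG]
        simp only [Matrix.trace_sum, Matrix.sum_mul]
        exact Finset.sum_congr rfl fun i _ => Matrix.trace_mul_cycle (K i) ρ (K i)ᴴ
      have h2 : ((∑ i, (K i)ᴴ * K i) * ρ).trace =
          ρ.trace - (((1 : Matrix (Fin d) (Fin d) ℂ) - ∑ i, (K i)ᴴ * K i) * ρ).trace := by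
        rw [Matrix.sub_mul, Matrix.one_mul, Matrix.trace_sub]
        ring
      have h3 : 0 ≤ ((((1 : Matrix (Fin d) (Fin d) ℂ) - ∑ i, (K i)ᴴ * K i) * ρ)).trace.re := by
        obtain ⟨B, hB⟩ : ∃ B : Matrix (Fin d) (Fin d) ℂ, ρ = Bᴴ * B := by
          open scoped MatrixOrder Matrix.Norms.L2Operator in
          exact CStarAlgebra.nonneg_iff_eq_star_mul_self.mp hρPSD.nonneg
        set M := (1 : Matrix (Fin d) (Fin d) ℂ) - ∑ i, (K i)ᴴ * K i with hM
        have h4 : (M * ρ).trace = (B * M * Bᴴ).trace := by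
          rw [hB, ← Matrix.mul_assoc, Matrix.trace_mul_comm (M * Bᴴ) B, ← Matrix.mul_assoc]
        rw [h4]
        exact psd_trace_re_nonneg (hK.mul_mul_conjTranspose_same B)
      have h5 : ρ.trace.re = 1 := by rw [hρtr]; simp
      rw [h1, h2, Complex.sub_re, h5]
      linarith [h3]
    -- τ = Z (G ρ) is PSD with re-trace ≤ 1
    have hZpsd : ∀ σ : Matrix (Fin d') (Fin d') ℂ, σ.PosSemidef → (Z σ).PosSemidef := by
      intro σ hσ
      rw [hZ]
      apply psd_sum
      intro j
      have := hσ.mul_mul_conjTranspose_same (P j)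
      rwa [hP1 j] at this
    have hZtr : ∀ σ : Matrix (Fin d') (Fin d') ℂ, (Z σ).trace = σ.trace := by
      intro σ
      rw [hZ]
      simp only [Matrix.trace_sum]
      have h6 : ∀ j, (P j * σ * P j).trace = (P j * σ).trace := by
        intro j
        rw [Matrix.trace_mul_cycle (P j) σ (P j), hP2 j]
      calc ∑ j, (P j * σ * P j).trace = ∑ j, (P j * σ).trace :=
            Finset.sum_congr rfl fun j _ => h6 j
      _ = ((∑ j, P j) * σ).trace := by rw [Matrix.sum_mul, Matrix.trace_sum]
      _ = σ.trace := by rw [hP4, Matrix.one_mul]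
    have hτPSD : (Z (G ρ)).PosSemidef := hZpsd _ hσPSD
    have hτtr : (Z (G ρ)).trace.re ≤ 1 := by rw [hZtr]; exact hσtr
    -- Z commutes with the perturbation
    have hZaff : Z (Gε ρ) = (1 - ε) • (Z (G ρ)) + (ε / d') • (1 : Matrix (Fin d') (Fin d') ℂ) := by
      rw [hGε]
      simp only [hZ]
      have h7 : ∀ j, P j * ((1 - ε) • G ρ + (ε / d') • (1 : Matrix (Fin d') (Fin d') ℂ)) * P j =
          (1 - ε) • (P j * G ρ * P j) + (ε / d') • (P j * P j) := by
        intro j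
        rw [Matrix.mul_add, Matrix.add_mul]
        congr 1
        · rw [mul_smul_comm, smul_mul_assoc]
        · rw [mul_smul_comm, smul_mul_assoc, Matrix.mul_one]
      calc ∑ j, P j * ((1 - ε) • G ρ + (ε / d') • (1 : Matrix (Fin d') (Fin d') ℂ)) * P j
          = ∑ j, ((1 - ε) • (P j * G ρ * P j) + (ε / d') • (P j * P j)) :=
            Finset.sum_congr rfl fun j _ => h7 j
      _ = (1 - ε) • (∑ j, P j * G ρ * P j) + (ε / d') • (∑ j, P j * P j) := by
            rw [Finset.sum_add_distrib, Finset.smul_sum, Finset.smul_sum]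
      _ = (1 - ε) • (∑ j, P j * G ρ * P j) + (ε / d') • (1 : Matrix (Fin d') (Fin d') ℂ) := by
            congr 1
            rw [show ∑ j, P j * P j = ∑ j, P j from Finset.sum_congr rfl fun j _ => hP2 j, hP4]
    have hGεval : Gε ρ = (1 - ε) • (G ρ) + (ε / d') • (1 : Matrix (Fin d') (Fin d') ℂ) := by
      rw [hGε]
    -- two entropy perturbation bounds
    have hb1 := vnEntropy_perturb hd' hε0 hεe hσPSD hσtr
    have hb2 := vnEntropy_perturb hd' hε0 hεe hτPSD hτtr
    rw [hf, hfε]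
    simp only []
    rw [hZaff, hGεval]
    rw [hζ]
    set H1 := vnEntropy (Z (G ρ))
    set H2 := vnEntropy (G ρ)
    set H1e := vnEntropy ((1 - ε) • (Z (G ρ)) + (ε / d') • (1 : Matrix (Fin d') (Fin d') ℂ))
    set H2e := vnEntropy ((1 - ε) • (G ρ) + (ε / d') • (1 : Matrix (Fin d') (Fin d') ℂ))
    have habs : |H1 - H2 - (H1e - H2e)| ≤ |H1e - H1| + |H2e - H2| := by
      have := abs_sub (H1 - H1e) (H2 - H2e)
      calc |H1 - H2 - (H1e - H2e)| = |(H1 - H1e) - (H2 - H2e)| := by ring_nf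
      _ ≤ |H1 - H1e| + |H2 - H2e| := abs_sub _ _
      _ = |H1e - H1| + |H2e - H2| := by rw [abs_sub_comm H1 H1e, abs_sub_comm H2 H2e]
    calc |H1 - H2 - (H1e - H2e)| ≤ |H1e - H1| + |H2e - H2| := habs
    _ ≤ ε * ((d' : ℝ) - 1) * Real.log ((d' : ℝ) / (ε * ((d' : ℝ) - 1))) +
        ε * ((d' : ℝ) - 1) * Real.log ((d' : ℝ) / (ε * ((d' : ℝ) - 1))) := add_le_add hb2 hb1
    _ = 2 * ε * ((d' : ℝ) - 1) * Real.log ((d' : ℝ) / (ε * ((d' : ℝ) - 1))) := by ring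
  -- assemble
  have k1 := key ρstar hρstar
  have k2 := key ρεstar hρεstar
  have m1 : f ρstar ≤ f ρεstar := hρstarMin ρεstar hρεstar
  have m2 : fε ρεstar ≤ fε ρstar := hρεstarMin ρstar hρstar
  rw [abs_le] at k1 k2 ⊢
  constructor
  · linarith [k2.1, m1]
  · linarith [k1.2, m2]
end

section
/- Let Γ̃_1,…,Γ̃_n be Hermitian d×d complex matrices, γ̃_1,…,γ̃_n real numbers, and ε' > 0, and let S̃_{ε'} = {ρ : ρ is a positive semidefinite d×d complex matrix with |Re Tr(Γ̃_i ρ) − γ̃_i| ≤ ε' for all i}. Let G be a CPTNI map from d×d to d'×d' complex matrices with d' ≥ 2, Z a pinching channel on d'×d' complex matrices, and define f(ρ) = H(Z(G(ρ))) − H(G(ρ)), G_ε(ρ) = (1−ε)·G(ρ) + (ε/d')·I_{d'}, f_ε(ρ) = H(Z(G_ε(ρ))) − H(G_ε(ρ)), and ζ_ε = 2ε(d'−1)·log(d'/(ε(d'−1))). Let ε satisfy 0 < ε ≤ 1/(e·(d'−1)), let ρ ∈ S̃_{ε'}, and let ∇ be a Hermitian d×d matrix satisfying the subgradient inequality f_ε(σ)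 ≥ f_ε(ρ) + Re Tr((σ − ρ)ᵀ ∇) for all σ ∈ S̃_{ε'}. Then for every pair y, z ∈ ℝⁿ with −z_i ≤ y_i ≤ z_i for all i and with ∇ − Σ_{i=1}^n y_i Γ̃_iᵀ positive semidefinite, and for every σ ∈ S̃_{ε'} with Tr σ = 1, one has f(σ) ≥ f_ε(ρ) − Re Tr(ρᵀ ∇) + Σ_{i=1}^n γ̃_i y_i − ε'·Σ_{i=1}^n z_i − ζ_ε. -/
open scoped BigOperators ComplexOrder Matrix

namespace RelaxedDualAux

open Matrix Polynomial

/-! ### Scalar lemmas about `Real.negMulLog` -/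

lemma eta_le_inv_e {x : ℝ} (hx : 0 ≤ x) : Real.negMulLog x ≤ (Real.exp 1)⁻¹ := by
  rcases eq_or_lt_of_le hx with h | h
  · simp [← h]; positivity
  · have he : (0:ℝ) < Real.exp 1 := Real.exp_pos 1
    have h1 : Real.log (1/(Real.exp 1 * x)) ≤ 1/(Real.exp 1 * x) - 1 :=
      Real.log_le_sub_one_of_pos (by positivity)
    have h2 : Real.log (1/(Real.exp 1 * x)) = -1 - Real.log x := by
      rw [one_div, Real.log_inv, Real.log_mul (ne_of_gt he) (ne_of_gt h), Real.log_exp]; ring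
    have h3 : -Real.log x ≤ 1/(Real.exp 1 * x) := by rw [h2] at h1; linarith
    have hrw : Real.negMulLog x = x * (-Real.log x) := by simp only [Real.negMulLog]; ring
    rw [hrw]
    calc x * (-Real.log x) ≤ x * (1/(Real.exp 1 * x)) :=
          mul_le_mul_of_nonneg_left h3 hx
      _ = (Real.exp 1)⁻¹ := by field_simp

lemma eta_subadd {x y : ℝ} (hx : 0 ≤ x) (hy : 0 ≤ y) :
    Real.negMulLog (x + y) ≤ Real.negMulLog x + Real.negMulLog y := by
  rcases eq_or_lt_of_le hx with h | h
  · simp [← h]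
  rcases eq_or_lt_of_le hy with h' | h'
  · simp [← h']
  have l1 : Real.log x ≤ Real.log (x+y) := Real.log_le_log h (by linarith)
  have l2 : Real.log y ≤ Real.log (x+y) := Real.log_le_log h' (by linarith)
  simp only [Real.negMulLog]
  nlinarith [mul_le_mul_of_nonneg_left l1 hx, mul_le_mul_of_nonneg_left l2 hy]

lemma eta_one_sub_le {ε : ℝ} (h1 : ε < 1) : Real.negMulLog (1 - ε) ≤ ε := by
  have h1e : (0:ℝ) < 1 - ε := by linarith
  have := Real.log_le_sub_one_of_pos (show (0:ℝ) < (1-ε)⁻¹ by positivity)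
  rw [Real.log_inv] at this
  simp only [Real.negMulLog]
  have hinv : (1-ε)⁻¹ - 1 = ε / (1-ε) := by field_simp; ring
  rw [hinv] at this
  have := mul_le_mul_of_nonneg_left this (le_of_lt h1e)
  calc -(1-ε) * Real.log (1-ε) = (1-ε) * (-Real.log (1-ε)) := by ring
    _ ≤ (1-ε) * (ε/(1-ε)) := this
    _ = ε := by field_simp

lemma eta_concave_pt {a x y : ℝ} (ha0 : 0 ≤ a) (ha1 : a ≤ 1) (hx : 0 ≤ x) (hy : 0 ≤ y) :
    a * Real.negMulLog x + (1 - a) * Real.negMulLog y ≤ Real.negMulLog (a * x + (1 - a) * y) := by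
  have := Real.concaveOn_negMulLog.2 (Set.mem_Ici.2 hx) (Set.mem_Ici.2 hy) ha0
    (show (0:ℝ) ≤ 1 - a by linarith) (by ring)
  simpa [smul_eq_mul] using this

lemma aux_up {x c ε : ℝ} (hx0 : 0 ≤ x) (hx1 : x ≤ 1) (hε0 : 0 < ε) (hε1 : ε < 1) (hc : 0 < c) :
    Real.negMulLog ((1-ε) * x + c) - Real.negMulLog x
      ≤ x * Real.negMulLog (1-ε) + Real.negMulLog c := by
  have h1 : Real.negMulLog ((1-ε)*x + c) ≤ Real.negMulLog ((1-ε)*x) + Real.negMulLog c :=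
    eta_subadd (by nlinarith) hc.le
  have h2 : Real.negMulLog ((1-ε)*x) =
      x * Real.negMulLog (1-ε) + (1-ε) * Real.negMulLog x := Real.negMulLog_mul _ _
  have h3 : 0 ≤ Real.negMulLog x := Real.negMulLog_nonneg hx0 hx1
  nlinarith [mul_nonneg hε0.le h3]

lemma aux_low {x D ε : ℝ} (hx0 : 0 ≤ x) (hD : 2 ≤ D) (hε0 : 0 < ε) (hε1 : ε < 1) :
    ε * (1/D * Real.log D) - ε * (Real.exp 1)⁻¹
      ≤ Real.negMulLog ((1-ε) * x + ε/D) - Real.negMulLog x := by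
  have hD0 : (0:ℝ) < D := by linarith
  have hrw : (1-ε) * x + ε/D = (1-ε) * x + (1-(1-ε)) * (1/D) := by ring
  have h1 := eta_concave_pt (a := 1-ε) (x := x) (y := 1/D)
    (by linarith) (by linarith) hx0 (by positivity)
  rw [hrw]
  have h2 : Real.negMulLog (1/D) = 1/D * Real.log D := by
    rw [one_div, Real.negMulLog, Real.log_inv]; ring
  have h3 : Real.negMulLog x ≤ (Real.exp 1)⁻¹ := eta_le_inv_e hx0
  rw [h2] at h1
  nlinarith [h1, h3]

lemma aux_arith {D ε : ℝ} (hD : 2 ≤ D) (hε0 : 0 < ε)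
    (hεe : ε ≤ 1 / (Real.exp 1 * (D - 1))) :
    ε * (1 + D / Real.exp 1 - Real.log ε) ≤ 2 * ε * (D - 1) * Real.log (D / (ε * (D - 1))) := by
  set x := D - 1 with hx
  have hx1 : 1 ≤ x := by simp [hx]; linarith
  have hx0 : 0 < x := by linarith
  have he : (0:ℝ) < Real.exp 1 := Real.exp_pos 1
  have he2 : (2:ℝ) ≤ Real.exp 1 := by
    have := Real.add_one_le_exp 1; linarith
  set L := -Real.log ε with hL
  have hLlb : 1 + Real.log x ≤ L := by
    have h1 : Real.log ε ≤ Real.log (1 / (Real.exp 1 * x)) :=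
      Real.log_le_log hε0 hεe
    rw [one_div, Real.log_inv, Real.log_mul (ne_of_gt he) (ne_of_gt hx0), Real.log_exp] at h1
    simp only [hL]; linarith
  have hL1 : 1 ≤ L := by
    have : 0 ≤ Real.log x := Real.log_nonneg hx1
    linarith
  have hDpos : (0:ℝ) < D := by linarith
  have hlogsplit : Real.log (D / (ε * x)) = Real.log (D / x) + L := by
    rw [Real.log_div (ne_of_gt hDpos) (by positivity), Real.log_mul (ne_of_gt hε0) (ne_of_gt hx0),
      Real.log_div (ne_of_gt hDpos) (ne_of_gt hx0), hL]
    ring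
  set S := Real.log (D / x) with hS
  have hSlb : 1 / D ≤ S := by
    have h1 : Real.log (x / D) ≤ x / D - 1 := Real.log_le_sub_one_of_pos (by positivity)
    have h2 : Real.log (x / D) = -S := by
      rw [Real.log_div (ne_of_gt hx0) (ne_of_gt hDpos), hS,
        Real.log_div (ne_of_gt hDpos) (ne_of_gt hx0)]; ring
    have h3 : x / D - 1 = -(1 / D) := by field_simp; linarith
    rw [h2, h3] at h1; linarith
  have hf1 : 1 ≤ 2 * x * S := by
    have h1 : 2 * x * (1 / D) ≤ 2 * x * S := by
      apply mul_le_mul_of_nonneg_left hSlb; linarith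
    have h2 : 1 ≤ 2 * x * (1 / D) := by
      rw [mul_one_div, le_div_iff₀ hDpos]; linarith
    exact h2.trans h1
  have hf3 : D / Real.exp 1 ≤ 2 * x - 1 := by
    have h1 : D / Real.exp 1 ≤ D / 2 :=
      div_le_div_of_nonneg_left (by linarith) (by norm_num) he2
    have h2 : D / 2 ≤ 2 * x - 1 := by
      rw [div_le_iff₀ (by norm_num : (0:ℝ) < 2)]; linarith
    linarith
  have hf2 : 2 * x - 1 ≤ (2 * x - 1) * L := by nlinarith
  have main : 1 + D / Real.exp 1 + L ≤ 2 * x * (S + L) := by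
    have hexp : 2 * x * (S + L) = 2 * x * S + ((2 * x - 1) * L + L) := by ring
    rw [hexp]
    clear_value x L S
    linarith
  calc ε * (1 + D / Real.exp 1 - Real.log ε) = ε * (1 + D / Real.exp 1 + L) := by rw [hL]; ring
    _ ≤ ε * (2 * x * (S + L)) := mul_le_mul_of_nonneg_left main (le_of_lt hε0)
    _ = 2 * ε * x * (S + L) := by ring
    _ = 2 * ε * (D - 1) * Real.log (D / (ε * (D - 1))) := by rw [← hx, hlogsplit]

/-! ### Eigenvalue/charpoly machinery -/

variable {k : ℕ}

lemma charpoly_conj (U A : Matrix (Fin k) (Fin k) ℂ) (hU : U ∈ Matrix.unitaryGroup (Fin k) ℂ) :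
    (U * A * star U).charpoly = A.charpoly := by
  have hUV : U * star U = 1 := (Matrix.mem_unitaryGroup_iff).mp hU
  have h1 : (U.map C) * ((star U).map C) = 1 := by
    rw [← Matrix.map_mul, hUV]; simp
  have hscal : (U.map C) * (Matrix.diagonal fun _ : Fin k => (X : ℂ[X])) =
      (Matrix.diagonal fun _ : Fin k => (X : ℂ[X])) * (U.map C) := by
    rw [← Matrix.scalar_apply, Matrix.scalar_commute]
    exact fun r => Commute.all _ _
  have key : charmatrix (U * A * star U) =
      (U.map C) * charmatrix A * ((star U).map C) := by
    calc charmatrix (U * A * star U)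
        = (Matrix.diagonal fun _ => X) - (U * A * star U).map C := rfl
      _ = (U.map C) * ((Matrix.diagonal fun _ => X) - A.map C) * ((star U).map C) := by
          rw [Matrix.mul_sub, Matrix.sub_mul]
          congr 1
          · rw [hscal, Matrix.mul_assoc, h1, Matrix.mul_one]
          · simp [Matrix.map_mul]
      _ = (U.map C) * charmatrix A * ((star U).map C) := rfl
  have hdet : (U.map C).det * ((star U).map C).det = 1 := by
    rw [← Matrix.det_mul, ← Matrix.map_mul, hUV]; simp
  rw [Matrix.charpoly, key, Matrix.det_mul, Matrix.det_mul, Matrix.charpoly]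
  calc (U.map C).det * (charmatrix A).det * ((star U).map C).det
      = (charmatrix A).det * ((U.map C).det * ((star U).map C).det) := by ring
    _ = (charmatrix A).det := by rw [hdet, mul_one]

lemma charpoly_diag (v : Fin k → ℂ) :
    (Matrix.diagonal v).charpoly = ∏ i, (X - C (v i)) := by
  rw [Matrix.charpoly_of_upperTriangular _ (Matrix.blockTriangular_diagonal v)]
  simp

lemma eig_sum {A : Matrix (Fin k) (Fin k) ℂ} (hA : A.IsHermitian)
    (U : Matrix (Fin k) (Fin k) ℂ) (hU : U ∈ Matrix.unitaryGroup (Fin k) ℂ) (μ : Fin k → ℝ)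
    (h : A = U * Matrix.diagonal (fun i => (μ i : ℂ)) * star U) (F : ℝ → ℝ) :
    ∑ i, F (hA.eigenvalues i) = ∑ i, F (μ i) := by
  have h2 : A = (hA.eigenvectorUnitary : Matrix (Fin k) (Fin k) ℂ) *
      Matrix.diagonal (fun i => (hA.eigenvalues i : ℂ)) *
      star (hA.eigenvectorUnitary : Matrix (Fin k) (Fin k) ℂ) := by
    exact hA.spectral_theorem
  have c1 : A.charpoly = ∏ i, (X - C ((μ i : ℂ))) := by
    conv_lhs => rw [h]
    rw [charpoly_conj _ _ hU, charpoly_diag]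
  have c2 : A.charpoly = ∏ i, (X - C ((hA.eigenvalues i : ℂ))) := by
    conv_lhs => rw [h2]
    rw [charpoly_conj _ _ (hA.eigenvectorUnitary).2, charpoly_diag]
  have key : (Finset.univ.val.map fun i => ((hA.eigenvalues i : ℂ))) =
      (Finset.univ.val.map fun i => ((μ i : ℂ))) := by
    have r1 := Polynomial.roots_multiset_prod_X_sub_C
      (Finset.univ.val.map fun i => ((hA.eigenvalues i : ℂ)))
    have r2 := Polynomial.roots_multiset_prod_X_sub_C
      (Finset.univ.val.map fun i => ((μ i : ℂ)))
    rw [Multiset.map_map] at r1 r2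
    have e1 : ((Finset.univ.val.map fun i => X - C ((hA.eigenvalues i : ℂ)))).prod
        = ((Finset.univ.val.map fun i => X - C ((μ i : ℂ)))).prod := by
      show (∏ i, (X - C ((hA.eigenvalues i : ℂ)))) = ∏ i, (X - C ((μ i : ℂ)))
      rw [← c2, c1]
    rw [← r1, ← r2]
    simp only [Function.comp] at e1 ⊢
    rw [e1]
  have keyR : (Finset.univ.val.map hA.eigenvalues) = (Finset.univ.val.map μ) := by
    have := congrArg (Multiset.map Complex.re) key
    rwa [Multiset.map_map, Multiset.map_map] at this
  calc ∑ i, F (hA.eigenvalues i) = ((Finset.univ.val.map hA.eigenvalues).map F).sum := by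
        rw [Multiset.map_map]; rfl
    _ = ((Finset.univ.val.map μ).map F).sum := by rw [keyR]
    _ = ∑ i, F (μ i) := by rw [Multiset.map_map]; rfl

lemma conj_isHermitian (U : Matrix (Fin k) (Fin k) ℂ) (μ : Fin k → ℝ) :
    (U * Matrix.diagonal (fun i => (μ i : ℂ)) * star U).IsHermitian := by
  have hD : (Matrix.diagonal (fun i => (μ i : ℂ))).IsHermitian :=
    Matrix.isHermitian_diagonal_of_self_adjoint _
      (by ext i; exact Complex.conj_ofReal (μ i))
  unfold Matrix.IsHermitian
  rw [Matrix.conjTranspose_mul, Matrix.conjTranspose_mul, hD.eq]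
  simp [Matrix.mul_assoc, Matrix.star_eq_conjTranspose]

lemma vnEntropy_spec {A : Matrix (Fin k) (Fin k) ℂ} (hA : A.IsHermitian) :
    vnEntropy A = ∑ i, Real.negMulLog (hA.eigenvalues i) := by
  rw [vnEntropy, dif_pos hA, ← Finset.sum_neg_distrib]
  congr 1; ext i; simp [Real.negMulLog]

lemma hermitian_affine {A : Matrix (Fin k) (Fin k) ℂ} (hA : A.IsHermitian) (a c : ℝ) :
    ((a : ℝ) • A + (c : ℝ) • (1 : Matrix (Fin k) (Fin k) ℂ)) =
      (hA.eigenvectorUnitary : Matrix (Fin k) (Fin k) ℂ) *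
        Matrix.diagonal (fun i => ((a * hA.eigenvalues i + c : ℝ) : ℂ)) *
        star (hA.eigenvectorUnitary : Matrix (Fin k) (Fin k) ℂ) := by
  have h2 : A = (hA.eigenvectorUnitary : Matrix (Fin k) (Fin k) ℂ) *
      Matrix.diagonal (fun i => (hA.eigenvalues i : ℂ)) *
      star (hA.eigenvectorUnitary : Matrix (Fin k) (Fin k) ℂ) := by
    exact hA.spectral_theorem
  have hUU : (hA.eigenvectorUnitary : Matrix (Fin k) (Fin k) ℂ) *
      star (hA.eigenvectorUnitary : Matrix (Fin k) (Fin k) ℂ) = 1 :=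
    (Matrix.mem_unitaryGroup_iff).mp (hA.eigenvectorUnitary).2
  have hdiag : Matrix.diagonal (fun i => ((a * hA.eigenvalues i + c : ℝ) : ℂ)) =
      (a : ℝ) • Matrix.diagonal (fun i => (hA.eigenvalues i : ℂ)) +
      (c : ℝ) • (1 : Matrix (Fin k) (Fin k) ℂ) := by
    ext i j
    by_cases h : i = j
    · subst h
      simp only [Matrix.add_apply, Matrix.smul_apply, Matrix.diagonal_apply_eq,
        Matrix.one_apply_eq, Complex.real_smul]
      push_cast; ring
    · simp [Matrix.diagonal_apply_ne _ h, Matrix.one_apply_ne h]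
  rw [hdiag, Matrix.mul_add, Matrix.add_mul, Matrix.mul_smul, Matrix.smul_mul,
    Matrix.mul_smul, Matrix.smul_mul, Matrix.mul_one, hUU, ← h2]

lemma vnEntropy_affine {A : Matrix (Fin k) (Fin k) ℂ} (hA : A.IsHermitian) (a c : ℝ) :
    vnEntropy ((a : ℝ) • A + (c : ℝ) • (1 : Matrix (Fin k) (Fin k) ℂ)) =
      ∑ i, Real.negMulLog (a * hA.eigenvalues i + c) := by
  have heq := hermitian_affine hA a c
  have hH : ((a : ℝ) • A + (c : ℝ) • (1 : Matrix (Fin k) (Fin k) ℂ)).IsHermitian := by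
    rw [heq]; exact conj_isHermitian _ _
  rw [vnEntropy_spec hH]
  exact eig_sum hH _ (hA.eigenvectorUnitary).2 _ heq Real.negMulLog

lemma sum_eig_eq_trace_re {A : Matrix (Fin k) (Fin k) ℂ} (hA : A.IsHermitian) :
    ∑ i, hA.eigenvalues i = A.trace.re := by
  have h2 : A = (hA.eigenvectorUnitary : Matrix (Fin k) (Fin k) ℂ) *
      Matrix.diagonal (fun i => (hA.eigenvalues i : ℂ)) *
      star (hA.eigenvectorUnitary : Matrix (Fin k) (Fin k) ℂ) := by
    exact hA.spectral_theorem
  have hVU : star (hA.eigenvectorUnitary : Matrix (Fin k) (Fin k) ℂ) *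
      (hA.eigenvectorUnitary : Matrix (Fin k) (Fin k) ℂ) = 1 :=
    (Matrix.mem_unitaryGroup_iff').mp (hA.eigenvectorUnitary).2
  conv_rhs => rw [h2]
  rw [Matrix.trace_mul_cycle, hVU, Matrix.one_mul, Matrix.trace_diagonal]
  rw [Complex.re_sum]
  simp

/-! ### PSD lemmas -/

lemma psd_sum {ι : Type*} (s : Finset ι) (F : ι → Matrix (Fin k) (Fin k) ℂ)
    (h : ∀ i ∈ s, (F i).PosSemidef) : (∑ i ∈ s, F i).PosSemidef := by
  classical
  induction s using Finset.induction_on with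
  | empty => simpa using Matrix.PosSemidef.zero
  | insert _ _ hnotmem ih =>
    rw [Finset.sum_insert hnotmem]
    exact (h _ (Finset.mem_insert_self _ _)).add
      (ih fun i hi => h i (Finset.mem_insert_of_mem hi))

lemma diag_re_nonneg {M : Matrix (Fin k) (Fin k) ℂ} (hM : M.PosSemidef) (i : Fin k) :
    0 ≤ (M i i).re := by
  have h := hM.diag_nonneg (i := i)
  exact (Complex.le_def.mp h).1

lemma trace_re_nonneg {M : Matrix (Fin k) (Fin k) ℂ} (hM : M.PosSemidef) :
    0 ≤ M.trace.re := by
  rw [Matrix.trace, Complex.re_sum]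
  exact Finset.sum_nonneg fun i _ => diag_re_nonneg hM i

lemma trace_mul_re_nonneg {A B : Matrix (Fin k) (Fin k) ℂ}
    (hA : A.PosSemidef) (hB : B.PosSemidef) : 0 ≤ ((A * B).trace).re := by
  obtain ⟨C, rfl⟩ : ∃ C : Matrix (Fin k) (Fin k) ℂ, A = Cᴴ * C := by
    open scoped MatrixOrder in exact CStarAlgebra.nonneg_iff_eq_star_mul_self.mp hA.nonneg
  rw [Matrix.mul_assoc, Matrix.trace_mul_comm]
  exact trace_re_nonneg ((hB.mul_mul_conjTranspose_same C))

end RelaxedDualAux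

set_option maxHeartbeats 2000000 in
open RelaxedDualAux in
/-- Theorem 3 of the paper, robust to numerical imprecision. For
`ρ` in the relaxed constraint set `S̃_{ε'}`, a Hermitian `∇` satisfying the
subgradient inequality for the perturbed objective `f_ε` on `S̃_{ε'}`, and a
relaxed dual-feasible pair `(y, z)`, every trace-one `σ ∈ S̃_{ε'}` satisfies
`f(σ) ≥ f_ε(ρ) − Re Tr(ρᵀ ∇) + Σ γ̃_i y_i − ε' Σ z_i − ζ_ε`. -/
theorem relaxed_dual_lower_bound
    {d d' n m p : ℕ} (hd' : 2 ≤ d')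
    (Γt : Fin n → Matrix (Fin d) (Fin d) ℂ) (hΓt : ∀ i, (Γt i).IsHermitian)
    (γt : Fin n → ℝ)
    (ε' : ℝ) (hε' : 0 < ε')
    (St : Set (Matrix (Fin d) (Fin d) ℂ))
    (hSt : St = {ρ | ρ.PosSemidef ∧ ∀ i, |((Γt i * ρ).trace).re - γt i| ≤ ε'})
    (K : Fin m → Matrix (Fin d') (Fin d) ℂ)
    (hK : ((1 : Matrix (Fin d) (Fin d) ℂ) - ∑ i, (K i)ᴴ * K i).PosSemidef)
    (G : Matrix (Fin d) (Fin d) ℂ → Matrix (Fin d') (Fin d') ℂ)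
    (hG : G = fun X => ∑ i, K i * X * (K i)ᴴ)
    (P : Fin p → Matrix (Fin d') (Fin d') ℂ)
    (hP1 : ∀ j, (P j)ᴴ = P j) (hP2 : ∀ j, P j * P j = P j)
    (hP3 : ∀ j k, j ≠ k → P j * P k = 0)
    (hP4 : ∑ j, P j = 1)
    (Z : Matrix (Fin d') (Fin d') ℂ → Matrix (Fin d') (Fin d') ℂ)
    (hZ : Z = fun X => ∑ j, P j * X * P j)
    (ε : ℝ) (hε0 : 0 < ε) (hεe : ε ≤ 1 / (Real.exp 1 * ((d' : ℝ) - 1)))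
    (f fε : Matrix (Fin d) (Fin d) ℂ → ℝ)
    (hf : f = fun X => vnEntropy (Z (G X)) - vnEntropy (G X))
    (Gε : Matrix (Fin d) (Fin d) ℂ → Matrix (Fin d') (Fin d') ℂ)
    (hGε : Gε = fun X => (1 - ε) • G X + (ε / d') • (1 : Matrix (Fin d') (Fin d') ℂ))
    (hfε : fε = fun X => vnEntropy (Z (Gε X)) - vnEntropy (Gε X))
    (ζ : ℝ) (hζ : ζ = 2 * ε * ((d' : ℝ) - 1) * Real.log ((d' : ℝ) / (ε * ((d' : ℝ) - 1))))
    (ρ : Matrix (Fin d) (Fin d) ℂ) (hρ : ρ ∈ St)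
    (grad : Matrix (Fin d) (Fin d) ℂ) (hgrad : grad.IsHermitian)
    (hsub : ∀ σ ∈ St, fε σ ≥ fε ρ + (((σ - ρ)ᵀ * grad).trace).re)
    (y z : Fin n → ℝ) (hyz : ∀ i, -z i ≤ y i ∧ y i ≤ z i)
    (hy : (grad - ∑ i, y i • (Γt i)ᵀ).PosSemidef) :
    ∀ σ ∈ St, σ.trace = 1 →
      f σ ≥ fε ρ - ((ρᵀ * grad).trace).re + ∑ i, γt i * y i - ε' * ∑ i, z i - ζ := by
  intro σ hσSt hσtr
  have hσmem := hσSt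
  rw [hSt] at hσmem
  obtain ⟨hσpsd, hσcon⟩ := hσmem
  -- numeric facts
  have hd2 : (2:ℝ) ≤ (d':ℝ) := by exact_mod_cast hd'
  have hd0 : (0:ℝ) < (d':ℝ) := by linarith
  have he2 : (2:ℝ) ≤ Real.exp 1 := by have := Real.add_one_le_exp 1; linarith
  have hε1 : ε < 1 := by
    have h1 : (1:ℝ) ≤ (d':ℝ) - 1 := by linarith
    have h2 : (2:ℝ) ≤ Real.exp 1 * ((d':ℝ) - 1) := by nlinarith
    have h3 : 1 / (Real.exp 1 * ((d':ℝ) - 1)) ≤ 1/2 := by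
      apply one_div_le_one_div_of_le (by norm_num) h2
    linarith
  have hc0 : 0 < ε / (d':ℝ) := by positivity
  -- PSD facts for G σ and Z (G σ)
  have hApsd : (G σ).PosSemidef := by
    rw [hG]
    exact psd_sum _ _ (fun i _ => hσpsd.mul_mul_conjTranspose_same (K i))
  have hBpsd : (Z (G σ)).PosSemidef := by
    rw [hZ]
    refine psd_sum _ _ (fun j _ => ?_)
    have := hApsd.mul_mul_conjTranspose_same (P j)
    rwa [hP1 j] at this
  have hAh : (G σ).IsHermitian := hApsd.1
  have hBh : (Z (G σ)).IsHermitian := hBpsd.1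
  -- trace facts
  have hσtr_re : σ.trace.re = 1 := by rw [hσtr]; simp
  have htrA_eq : (G σ).trace = ((∑ i, (K i)ᴴ * K i) * σ).trace := by
    rw [hG]
    simp only
    rw [Matrix.trace_sum, Finset.sum_mul, Matrix.trace_sum]
    congr 1; funext i
    rw [Matrix.trace_mul_cycle]
  have htrA_le1 : (G σ).trace.re ≤ 1 := by
    have h0 : 0 ≤ ((((1 : Matrix (Fin d) (Fin d) ℂ) - ∑ i, (K i)ᴴ * K i) * σ).trace).re :=
      trace_mul_re_nonneg hK hσpsd
    rw [Matrix.sub_mul, Matrix.one_mul, Matrix.trace_sub, Complex.sub_re, hσtr_re] at h0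
    rw [htrA_eq]; linarith
  have htrA_0 : 0 ≤ (G σ).trace.re := trace_re_nonneg hApsd
  have htrB_eq : (Z (G σ)).trace = (G σ).trace := by
    conv_lhs => rw [hZ]
    simp only
    rw [Matrix.trace_sum]
    have hterm : ∀ j, (P j * G σ * P j).trace = (P j * G σ).trace := by
      intro j
      rw [Matrix.trace_mul_cycle, hP2 j]
    simp only [hterm]
    have : ∑ j, (P j * G σ).trace = ((∑ j, P j) * G σ).trace := by
      rw [Finset.sum_mul, Matrix.trace_sum]
    rw [this, hP4, Matrix.one_mul]
  -- eigenvalues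
  have hlam0 : ∀ i, 0 ≤ hAh.eigenvalues i := fun i => hApsd.eigenvalues_nonneg i
  have hkap0 : ∀ i, 0 ≤ hBh.eigenvalues i := fun i => hBpsd.eigenvalues_nonneg i
  have hlam_sum : ∑ i, hAh.eigenvalues i = (G σ).trace.re := sum_eig_eq_trace_re hAh
  have hkap_sum : ∑ i, hBh.eigenvalues i = (G σ).trace.re := by
    rw [sum_eig_eq_trace_re hBh, htrB_eq]
  have hlam_le1 : ∀ i, hAh.eigenvalues i ≤ 1 := by
    intro i
    have h := Finset.single_le_sum (f := hAh.eigenvalues) (fun j _ => hlam0 j) (Finset.mem_univ i)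
    rw [hlam_sum] at h; linarith
  have hkap_le1 : ∀ i, hBh.eigenvalues i ≤ 1 := by
    intro i
    have h := Finset.single_le_sum (f := hBh.eigenvalues) (fun j _ => hkap0 j) (Finset.mem_univ i)
    rw [hkap_sum] at h; linarith
  -- entropy identities
  have hEA : vnEntropy (G σ) = ∑ i, Real.negMulLog (hAh.eigenvalues i) := vnEntropy_spec hAh
  have hEB : vnEntropy (Z (G σ)) = ∑ i, Real.negMulLog (hBh.eigenvalues i) := vnEntropy_spec hBh
  have hGεσ : Gε σ = (1-ε) • (G σ) + (ε/(d':ℝ)) • (1 : Matrix (Fin d') (Fin d') ℂ) := by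
    rw [hGε]
  have hEAε : vnEntropy (Gε σ) = ∑ i, Real.negMulLog ((1-ε) * hAh.eigenvalues i + ε/(d':ℝ)) := by
    rw [hGεσ]; exact vnEntropy_affine hAh (1-ε) (ε/(d':ℝ))
  have hZlin : Z (Gε σ) = (1-ε) • (Z (G σ)) + (ε/(d':ℝ)) • (1 : Matrix (Fin d') (Fin d') ℂ) := by
    rw [hGεσ]
    conv_lhs => rw [hZ]
    conv_rhs => rw [hZ]
    simp only
    have hterm : ∀ j : Fin p,
        P j * ((1-ε) • (G σ) + (ε/(d':ℝ)) • (1 : Matrix (Fin d') (Fin d') ℂ)) * P j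
          = (1-ε) • (P j * (G σ) * P j) + (ε/(d':ℝ)) • P j := by
      intro j
      rw [Matrix.mul_add, Matrix.add_mul, Matrix.mul_smul, Matrix.smul_mul,
        Matrix.mul_smul, Matrix.smul_mul, Matrix.mul_one, hP2 j]
    simp only [hterm]
    rw [Finset.sum_add_distrib, ← Finset.smul_sum, ← Finset.smul_sum, hP4]
  have hEBε : vnEntropy (Z (Gε σ)) = ∑ i, Real.negMulLog ((1-ε) * hBh.eigenvalues i + ε/(d':ℝ)) := by
    rw [hZlin]; exact vnEntropy_affine hBh (1-ε) (ε/(d':ℝ))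
  -- upper bound for pinched part
  have hUp : ∑ i, Real.negMulLog ((1-ε) * hBh.eigenvalues i + ε/(d':ℝ))
      - ∑ i, Real.negMulLog (hBh.eigenvalues i)
      ≤ ε + (ε * Real.log (d':ℝ) - ε * Real.log ε) := by
    rw [← Finset.sum_sub_distrib]
    have step1 : ∑ i, (Real.negMulLog ((1-ε) * hBh.eigenvalues i + ε/(d':ℝ))
        - Real.negMulLog (hBh.eigenvalues i))
        ≤ ∑ i, (hBh.eigenvalues i * Real.negMulLog (1-ε) + Real.negMulLog (ε/(d':ℝ))) :=
      Finset.sum_le_sum (fun i _ => aux_up (hkap0 i) (hkap_le1 i) hε0 hε1 hc0)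
    have step2 : ∑ i : Fin d', (hBh.eigenvalues i * Real.negMulLog (1-ε)
        + Real.negMulLog (ε/(d':ℝ)))
        = (∑ i, hBh.eigenvalues i) * Real.negMulLog (1-ε)
          + (d':ℝ) * Real.negMulLog (ε/(d':ℝ)) := by
      rw [Finset.sum_add_distrib, ← Finset.sum_mul, Finset.sum_const, Finset.card_univ,
        Fintype.card_fin, nsmul_eq_mul]
    have h1 : (∑ i, hBh.eigenvalues i) * Real.negMulLog (1-ε) ≤ 1 * ε := by
      apply mul_le_mul (by rw [hkap_sum]; exact htrA_le1) (eta_one_sub_le hε1)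
        (Real.negMulLog_nonneg (by linarith) (by linarith)) (by norm_num)
    have h2 : (d':ℝ) * Real.negMulLog (ε/(d':ℝ)) = ε * Real.log (d':ℝ) - ε * Real.log ε := by
      rw [Real.negMulLog, Real.log_div (ne_of_gt hε0) (ne_of_gt hd0)]
      field_simp
      ring
    linarith [step1, step2]
  -- lower bound for unpinched part
  have hLow : ε * Real.log (d':ℝ) - (d':ℝ) * (ε * (Real.exp 1)⁻¹)
      ≤ ∑ i, Real.negMulLog ((1-ε) * hAh.eigenvalues i + ε/(d':ℝ))
        - ∑ i, Real.negMulLog (hAh.eigenvalues i) := by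
    rw [← Finset.sum_sub_distrib]
    have step1 : ∑ i : Fin d', (ε * (1/(d':ℝ) * Real.log (d':ℝ)) - ε * (Real.exp 1)⁻¹)
        ≤ ∑ i, (Real.negMulLog ((1-ε) * hAh.eigenvalues i + ε/(d':ℝ))
          - Real.negMulLog (hAh.eigenvalues i)) :=
      Finset.sum_le_sum (fun i _ => aux_low (hlam0 i) hd2 hε0 hε1)
    rw [Finset.sum_const, Finset.card_univ, Fintype.card_fin, nsmul_eq_mul] at step1
    have heq : (d':ℝ) * (ε * (1/(d':ℝ) * Real.log (d':ℝ)) - ε * (Real.exp 1)⁻¹)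
        = ε * Real.log (d':ℝ) - (d':ℝ) * (ε * (Real.exp 1)⁻¹) := by
      field_simp
    linarith [step1, heq]
  -- perturbation bound : f σ ≥ fε σ - ζ
  have hφ : fε σ - ζ ≤ f σ := by
    have e1 : f σ = ∑ i, Real.negMulLog (hBh.eigenvalues i)
        - ∑ i, Real.negMulLog (hAh.eigenvalues i) := by
      rw [hf]; simp only; rw [hEB, hEA]
    have e2 : fε σ = ∑ i, Real.negMulLog ((1-ε) * hBh.eigenvalues i + ε/(d':ℝ))
        - ∑ i, Real.negMulLog ((1-ε) * hAh.eigenvalues i + ε/(d':ℝ)) := by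
      rw [hfε]; simp only; rw [hEBε, hEAε]
    have harith := aux_arith hd2 hε0 hεe
    have hexp : ε * (1 + (d':ℝ) / Real.exp 1 - Real.log ε)
        = ε + ε * ((d':ℝ) / Real.exp 1) - ε * Real.log ε := by ring
    rw [hexp] at harith
    have hinv : (d':ℝ) * (ε * (Real.exp 1)⁻¹) = ε * ((d':ℝ) / Real.exp 1) := by
      rw [div_eq_mul_inv]; ring
    rw [e1, e2, hζ]
    linarith [hUp, hLow, harith, hinv]
  -- dual feasibility part
  have hsub' := hsub σ hσSt
  have htr1 : ((σ - ρ)ᵀ * grad).trace = (σᵀ * grad).trace - (ρᵀ * grad).trace := by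
    rw [Matrix.transpose_sub, Matrix.sub_mul, Matrix.trace_sub]
  have hMre : ((σᵀ * (∑ i, y i • (Γt i)ᵀ)).trace).re = ∑ i, y i * ((Γt i * σ).trace).re := by
    rw [Matrix.mul_sum, Matrix.trace_sum, Complex.re_sum]
    congr 1; funext i
    rw [Matrix.mul_smul, Matrix.trace_smul, ← Matrix.transpose_mul, Matrix.trace_transpose]
    rw [Complex.real_smul, Complex.re_ofReal_mul]
  have hpsd0 : 0 ≤ ((σᵀ * (grad - ∑ i, y i • (Γt i)ᵀ)).trace).re :=
    trace_mul_re_nonneg hσpsd.transpose hy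
  have htr2 : (σᵀ * (grad - ∑ i, y i • (Γt i)ᵀ)).trace
      = (σᵀ * grad).trace - (σᵀ * (∑ i, y i • (Γt i)ᵀ)).trace := by
    rw [Matrix.mul_sub, Matrix.trace_sub]
  have hper : ∀ i : Fin n, γt i * y i - ε' * z i ≤ y i * ((Γt i * σ).trace).re := by
    intro i
    obtain ⟨hy1, hy2⟩ := hyz i
    have hz0 : 0 ≤ z i := by linarith
    have habs : |y i * (((Γt i * σ).trace).re - γt i)| ≤ z i * ε' := by
      rw [abs_mul]
      exact mul_le_mul (abs_le.mpr ⟨hy1, hy2⟩) (hσcon i) (abs_nonneg _) hz0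
    have h2 := neg_abs_le (y i * (((Γt i * σ).trace).re - γt i))
    have hexp : y i * (((Γt i * σ).trace).re - γt i)
        = y i * ((Γt i * σ).trace).re - y i * γt i := by ring
    linarith [habs, h2, hexp]
  have hdual : ∑ i, γt i * y i - ε' * ∑ i, z i ≤ ((σᵀ * grad).trace).re := by
    have hs : ∑ i, (γt i * y i - ε' * z i) ≤ ∑ i, y i * ((Γt i * σ).trace).re :=
      Finset.sum_le_sum (fun i _ => hper i)
    rw [Finset.sum_sub_distrib, ← Finset.mul_sum] at hs
    have hsplit : ((σᵀ * grad).trace).re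
        = ((σᵀ * (grad - ∑ i, y i • (Γt i)ᵀ)).trace).re
          + ((σᵀ * (∑ i, y i • (Γt i)ᵀ)).trace).re := by
      rw [htr2, Complex.sub_re]; ring
    rw [hsplit, hMre]
    linarith [hpsd0, hs]
  -- final assembly
  rw [htr1, Complex.sub_re] at hsub'
  linarith [hφ, hsub', hdual]
end
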